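/- arXiv:1409.2070 — 2 statements merged into one kernel-verified Lean document; each statement's English description precedes it below -/
import Mathlib

section
/- Let {n_k}_{k≥1} be integers with n_k ≥ 2 and c_k ∈ (0, 1/n_k] satisfy lim_{k→∞} (log c_k)/(log(c_1⋯c_k)) = 0. Then for every Moran set E ∈ M(J, {n_k}, {c_k}), dim_qA E = lim_{δ→0} limsup_{q→∞} max_{1 ≤ p ≤ l_{q,δ}} (log(n_p⋯n_q))/(−log(c_p⋯c_q)), where l_{q,δ} = max{1 ≤ p ≤ q : (log(c_p⋯c_q))/(log(c_1⋯c_q)) > δ}. -/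
set_option maxHeartbeats 1000000

open Filter Topology Metric Set

/-- `coverNum X r R` : the smallest number of closed balls of radius `r` needed to cover
`X ∩ B` over all closed balls `B` of radius `R`. -/
noncomputable def coverNum (X : Type*) [MetricSpace X] (r R : ℝ) : ℕ :=
  sSup {n : ℕ | ∃ x : X, n = sInf {m : ℕ | ∃ s : Finset X,
    s.card = m ∧ Metric.closedBall x R ⊆ ⋃ y ∈ s, Metric.closedBall y r}}

/-- `hFun X δ = inf {α ≥ 0 : ∃ b, c > 0, N_{r,R}(X) ≤ c (R/r)^α for all 0 < r < r^(1-δ) ≤ R < b}`. -/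
noncomputable def hFun (X : Type*) [MetricSpace X] (δ : ℝ) : ℝ :=
  sInf {α : ℝ | 0 ≤ α ∧ ∃ b c : ℝ, 0 < b ∧ 0 < c ∧ ∀ r R : ℝ,
    0 < r → r < r ^ (1 - δ) → r ^ (1 - δ) ≤ R → R < b →
      (coverNum X r R : ℝ) ≤ c * (R / r) ^ α}

/-- The quasi-Assouad dimension `dim_qA X = lim_{δ → 0⁺} h_X(δ)`; since `h_X` is
non-increasing in `δ`, this limit equals the supremum over `δ ∈ (0,1)`. -/
noncomputable def dimqA (X : Type*) [MetricSpace X] : ℝ :=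
  sSup (hFun X '' Set.Ioo 0 1)

/-- A word `i₁ ⋯ i_k` (as a list, head = `i₁`) is admissible for the branching numbers `n`
if `1 ≤ i_t ≤ n t` for every `t`. -/
def MoranAdmissible (n : ℕ → ℕ) (w : List ℕ) : Prop :=
  ∀ t : ℕ, t < w.length → 1 ≤ w.getD t 0 ∧ w.getD t 0 ≤ n (t + 1)

/-- `F ∈ M(J, {n_k}, {c_k})` : `F` is a Moran set with initial closed interval `J`,
branching numbers `n_k` and contraction ratios `c_k` (indices start at `1`). -/
def IsMoranSet (J : Set ℝ) (n : ℕ → ℕ) (c : ℕ → ℝ) (F : Set ℝ) : Prop :=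
  ∃ A B : ℝ, A < B ∧ J = Set.Icc A B ∧
  ∃ a b : List ℕ → ℝ,
    a [] = A ∧ b [] = B ∧
    (∀ w : List ℕ, MoranAdmissible n w → ∀ j : ℕ, 1 ≤ j → j ≤ n (w.length + 1) →
      a w ≤ a (w ++ [j]) ∧ a (w ++ [j]) < b (w ++ [j]) ∧ b (w ++ [j]) ≤ b w ∧
      b (w ++ [j]) - a (w ++ [j]) = c (w.length + 1) * (b w - a w)) ∧
    (∀ w : List ℕ, MoranAdmissible n w → ∀ j j' : ℕ, 1 ≤ j → j ≤ n (w.length + 1) →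
      1 ≤ j' → j' ≤ n (w.length + 1) → j ≠ j' →
      interior (Set.Icc (a (w ++ [j])) (b (w ++ [j]))) ∩
        interior (Set.Icc (a (w ++ [j'])) (b (w ++ [j']))) = ∅) ∧
    F = ⋂ k : ℕ, ⋃ w ∈ {w : List ℕ | MoranAdmissible n w ∧ w.length = k},
      Set.Icc (a w) (b w)

/-- `s_{p,q} = log (n_p ⋯ n_q) / (- log (c_p ⋯ c_q))`. -/
noncomputable def spq (n : ℕ → ℕ) (c : ℕ → ℝ) (p q : ℕ) : ℝ :=
  Real.log (∏ i ∈ Finset.Icc p q, (n i : ℝ)) / (-Real.log (∏ i ∈ Finset.Icc p q, c i))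

/-- `l_{q,δ} = max {1 ≤ p ≤ q : log (c_p ⋯ c_q) / log (c_1 ⋯ c_q) > δ}`. -/
noncomputable def lIdx (c : ℕ → ℝ) (δ : ℝ) (q : ℕ) : ℕ :=
  sSup {p : ℕ | 1 ≤ p ∧ p ≤ q ∧
    δ < Real.log (∏ i ∈ Finset.Icc p q, c i) / Real.log (∏ i ∈ Finset.Icc 1 q, c i)}


namespace MoranAux

/-- Words `v` of length `m` with `v t ∈ [1, n (k+t+1)]`: suffix-admissible words starting
after level `k`. -/
def D (n : ℕ → ℕ) (k : ℕ) : ℕ → Finset (List ℕ)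
  | 0 => {[]}
  | m+1 => (D n k m).biUnion (fun v => (Finset.Icc 1 (n (k+m+1))).image (fun j => v ++ [j]))

lemma length_of_mem_D {n : ℕ → ℕ} {k m : ℕ} {v : List ℕ} (h : v ∈ D n k m) :
    v.length = m := by
  induction m generalizing v with
  | zero => simp [D] at h; simp [h]
  | succ m ih =>
    simp only [D, Finset.mem_biUnion, Finset.mem_image] at h
    obtain ⟨u, hu, j, hj, rfl⟩ := h
    simp [ih hu]

lemma mem_D_iff {n : ℕ → ℕ} {k m : ℕ} {v : List ℕ} :
    v ∈ D n k m ↔ v.length = m ∧ ∀ t < m, 1 ≤ v.getD t 0 ∧ v.getD t 0 ≤ n (k+t+1) := by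
  induction m generalizing v with
  | zero =>
    simp only [D, Finset.mem_singleton]
    constructor
    · rintro rfl; exact ⟨rfl, by omega⟩
    · rintro ⟨hl, _⟩; exact List.length_eq_zero_iff.mp hl
  | succ m ih =>
    constructor
    · intro h
      simp only [D, Finset.mem_biUnion, Finset.mem_image, Finset.mem_Icc] at h
      obtain ⟨u, hu, j, hj, rfl⟩ := h
      have hul : u.length = m := length_of_mem_D hu
      rw [ih] at hu
      refine ⟨by simp [hul], ?_⟩
      intro t ht
      rcases lt_or_eq_of_le (Nat.lt_succ_iff.mp ht) with h' | h'
      · rw [List.getD_append _ _ _ _ (by omega)]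
        exact hu.2 t h'
      · subst h'
        rw [← hul, List.getD_append_right _ _ _ _ (le_refl _)]
        simpa [hul] using hj
    · rintro ⟨hl, hb⟩
      have hv : v ≠ [] := by intro h; simp [h] at hl
      have hv' : v = v.dropLast ++ [v.getLast hv] := (List.dropLast_append_getLast hv).symm
      have hld : v.dropLast.length = m := by simp [hl]
      simp only [D, Finset.mem_biUnion, Finset.mem_image, Finset.mem_Icc]
      refine ⟨v.dropLast, ?_, v.getLast hv, ?_, hv'.symm⟩
      · rw [ih]
        refine ⟨hld, fun t ht => ?_⟩
        have h1 : v.getD t 0 = v.dropLast.getD t 0 := by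
          conv_lhs => rw [hv']
          rw [List.getD_append _ _ _ _ (by omega)]
        rw [← h1]
        exact hb t (by omega)
      · have h2 : v.getD m 0 = v.getLast hv := by
          conv_lhs => rw [hv']
          rw [List.getD_append_right _ _ _ _ (by omega)]
          simp [hld]
        rw [← h2]
        exact hb m (Nat.lt_succ_self m)

lemma card_D {n : ℕ → ℕ} (hn : ∀ i, 1 ≤ i → 1 ≤ n i) (k m : ℕ) :
    (D n k m).card = ∏ i ∈ Finset.Ioc k (k+m), n i := by
  induction m with
  | zero => simp [D]
  | succ m ih =>
    have hdisj : ∀ u ∈ D n k m, ∀ u' ∈ D n k m, u ≠ u' →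
        Disjoint ((Finset.Icc 1 (n (k+m+1))).image (fun j => u ++ [j]))
          ((Finset.Icc 1 (n (k+m+1))).image (fun j => u' ++ [j])) := by
      intro u hu u' hu' hne
      simp only [Finset.disjoint_left, Finset.mem_image]
      rintro x ⟨j, hj, rfl⟩ ⟨j', hj', hx⟩
      exact hne ((List.append_inj_left' hx rfl).symm)
    rw [D, Finset.card_biUnion hdisj]
    have : ∀ u ∈ D n k m, ((Finset.Icc 1 (n (k+m+1))).image (fun j => u ++ [j])).card
        = n (k+m+1) := by
      intro u _
      rw [Finset.card_image_of_injective _ (fun j j' h => by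
        simpa using List.append_inj_right h rfl)]
      simp
    rw [Finset.sum_congr rfl this, Finset.sum_const, smul_eq_mul, ih,
      show k + (m+1) = (k+m) + 1 by ring, Finset.prod_Ioc_succ_top (by omega), mul_comm]

lemma admissible_iff_mem_D {n : ℕ → ℕ} {k : ℕ} {w : List ℕ} :
    (MoranAdmissible n w ∧ w.length = k) ↔ w ∈ D n 0 k := by
  rw [mem_D_iff, MoranAdmissible]
  constructor
  · rintro ⟨h1, rfl⟩
    exact ⟨rfl, fun t ht => by simpa using h1 t ht⟩
  · rintro ⟨rfl, h2⟩
    exact ⟨fun t ht => by simpa using h2 t ht, rfl⟩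

lemma append_mem_D {n : ℕ → ℕ} {k m : ℕ} {w v : List ℕ}
    (hw : w ∈ D n 0 k) (hv : v ∈ D n k m) : w ++ v ∈ D n 0 (k+m) := by
  rw [mem_D_iff] at *
  obtain ⟨hwl, hwb⟩ := hw
  obtain ⟨hvl, hvb⟩ := hv
  refine ⟨by simp [hwl, hvl], fun t ht => ?_⟩
  by_cases h : t < k
  · rw [List.getD_append _ _ _ _ (by omega)]
    exact hwb t h
  · rw [List.getD_append_right _ _ _ _ (by omega)]
    have := hvb (t - k) (by omega)
    rw [hwl]
    convert this using 3
    omega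

lemma take_mem_D {n : ℕ → ℕ} {k j : ℕ} {w : List ℕ}
    (hw : w ∈ D n 0 k) (hj : j ≤ k) : w.take j ∈ D n 0 j := by
  rw [mem_D_iff] at *
  obtain ⟨hwl, hwb⟩ := hw
  refine ⟨by simp [hwl, hj], fun t ht => ?_⟩
  rw [List.getD_eq_getElem?_getD, List.getElem?_take_of_lt ht, ← List.getD_eq_getElem?_getD]
  exact hwb t (by omega)

lemma drop_mem_D {n : ℕ → ℕ} {k j : ℕ} {w : List ℕ}
    (hw : w ∈ D n 0 k) (hj : j ≤ k) : w.drop j ∈ D n j (k - j) := by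
  rw [mem_D_iff] at *
  obtain ⟨hwl, hwb⟩ := hw
  refine ⟨by simp [hwl], fun t ht => ?_⟩
  rw [List.getD_eq_getElem?_getD, List.getElem?_drop, ← List.getD_eq_getElem?_getD]
  have := hwb (j + t) (by omega)
  convert this using 3
  omega

end MoranAux

/-- Bundled Moran structure data. -/
structure MD where
  n : ℕ → ℕ
  c : ℕ → ℝ
  A : ℝ
  B : ℝ
  a : List ℕ → ℝ
  b : List ℕ → ℝ
  E : Set ℝ
  hn : ∀ k, 1 ≤ k → 2 ≤ n k
  hc : ∀ k, 1 ≤ k → 0 < c k ∧ c k ≤ 1 / (n k : ℝ)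
  hAB : A < B
  ha0 : a [] = A
  hb0 : b [] = B
  hstep : ∀ w, MoranAdmissible n w → ∀ j, 1 ≤ j → j ≤ n (w.length+1) →
      a w ≤ a (w ++ [j]) ∧ a (w ++ [j]) < b (w ++ [j]) ∧ b (w ++ [j]) ≤ b w ∧
      b (w ++ [j]) - a (w ++ [j]) = c (w.length+1) * (b w - a w)
  hsep : ∀ w, MoranAdmissible n w → ∀ j j', 1 ≤ j → j ≤ n (w.length+1) → 1 ≤ j' →
      j' ≤ n (w.length+1) → j ≠ j' →
      interior (Set.Icc (a (w++[j])) (b (w++[j]))) ∩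
        interior (Set.Icc (a (w++[j'])) (b (w++[j']))) = ∅
  hEq : E = ⋂ k : ℕ, ⋃ w ∈ {w : List ℕ | MoranAdmissible n w ∧ w.length = k},
      Set.Icc (a w) (b w)

namespace MD

variable (M : MD)

/-- Basic interval length at level `k`. -/
noncomputable def lam (k : ℕ) : ℝ := (∏ i ∈ Finset.Icc 1 k, M.c i) * (M.B - M.A)

lemma c_pos {i : ℕ} (hi : 1 ≤ i) : 0 < M.c i := (M.hc i hi).1

lemma c_le_half {i : ℕ} (hi : 1 ≤ i) : M.c i ≤ 1/2 := by
  have h1 := (M.hc i hi).2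
  have h2 := M.hn i hi
  have h3 : (2 : ℝ) ≤ (M.n i : ℝ) := by exact_mod_cast h2
  calc M.c i ≤ 1 / (M.n i : ℝ) := h1
    _ ≤ 1/2 := by
       apply one_div_le_one_div_of_le <;> linarith

lemma prod_c_pos (p q : ℕ) (hp : 1 ≤ p) : 0 < ∏ i ∈ Finset.Icc p q, M.c i :=
  Finset.prod_pos (fun i hi => M.c_pos (le_trans hp (Finset.mem_Icc.mp hi).1))

lemma prod_c_le_one (p q : ℕ) (hp : 1 ≤ p) : ∏ i ∈ Finset.Icc p q, M.c i ≤ 1 := by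
  apply Finset.prod_le_one
  · exact fun i hi => (M.c_pos (le_trans hp (Finset.mem_Icc.mp hi).1)).le
  · intro i hi
    have := M.c_le_half (le_trans hp (Finset.mem_Icc.mp hi).1)
    linarith

lemma Lpos : (0:ℝ) < M.B - M.A := sub_pos.mpr M.hAB

lemma lam_pos (k : ℕ) : 0 < M.lam k := mul_pos (M.prod_c_pos 1 k le_rfl) M.Lpos

lemma lam_succ (k : ℕ) : M.lam (k+1) = M.c (k+1) * M.lam k := by
  unfold lam
  rw [Finset.prod_Icc_succ_top (Nat.le_add_left 1 k)]
  ring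

lemma lam_zero : M.lam 0 = M.B - M.A := by simp [lam]

lemma lam_le_half (k : ℕ) : M.lam (k+1) ≤ M.lam k / 2 := by
  rw [M.lam_succ]
  have h1 := M.c_le_half (Nat.le_add_left 1 k)
  have h2 := M.c_pos (Nat.le_add_left 1 k)
  nlinarith [M.lam_pos k]

lemma lam_anti : StrictAnti M.lam := by
  apply strictAnti_nat_of_succ_lt
  intro k
  have := M.lam_le_half k
  have := M.lam_pos k
  linarith

lemma lam_tendsto : Filter.Tendsto M.lam Filter.atTop (𝓝 0) := by
  have hgeom : ∀ k, M.lam k ≤ (M.B - M.A) * (1/2)^k := by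
    intro k
    induction k with
    | zero => simp [M.lam_zero]
    | succ k ih =>
      calc M.lam (k+1) ≤ M.lam k / 2 := M.lam_le_half k
        _ ≤ (M.B - M.A) * (1/2)^k / 2 := by linarith
        _ = (M.B - M.A) * (1/2)^(k+1) := by ring
  have h0 : Filter.Tendsto (fun k : ℕ => (M.B - M.A) * (1/2 : ℝ)^k) Filter.atTop (𝓝 0) := by
    rw [show (0:ℝ) = (M.B - M.A) * 0 by ring]
    exact (tendsto_pow_atTop_nhds_zero_of_lt_one (by norm_num) (by norm_num)).const_mul _
  exact squeeze_zero (fun k => (M.lam_pos k).le) hgeom h0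

/-- `w` is a valid word of length `k`. -/
def Adm (k : ℕ) (w : List ℕ) : Prop := w ∈ MoranAux.D M.n 0 k

lemma adm_iff {k : ℕ} {w : List ℕ} :
    M.Adm k w ↔ MoranAdmissible M.n w ∧ w.length = k := Iff.symm MoranAux.admissible_iff_mem_D

lemma adm_length {k : ℕ} {w : List ℕ} (h : M.Adm k w) : w.length = k :=
  MoranAux.length_of_mem_D h

lemma adm_nil : M.Adm 0 [] := by
  rw [adm_iff]
  exact ⟨fun t ht => by simp at ht, rfl⟩

lemma mem_D_succ {k : ℕ} {w : List ℕ} :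
    M.Adm (k+1) w ↔ ∃ u, M.Adm k u ∧ ∃ j, (1 ≤ j ∧ j ≤ M.n (k+1)) ∧ w = u ++ [j] := by
  unfold Adm
  simp only [MoranAux.D, Finset.mem_biUnion, Finset.mem_image, Finset.mem_Icc, Nat.zero_add]
  constructor
  · rintro ⟨u, hu, j, hj, rfl⟩
    exact ⟨u, hu, j, hj, rfl⟩
  · rintro ⟨u, hu, j, hj, rfl⟩
    exact ⟨u, hu, j, hj, rfl⟩

lemma step' {k : ℕ} {u : List ℕ} (hu : M.Adm k u) {j : ℕ} (hj1 : 1 ≤ j)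
    (hj2 : j ≤ M.n (k+1)) :
    M.a u ≤ M.a (u ++ [j]) ∧ M.a (u ++ [j]) < M.b (u ++ [j]) ∧ M.b (u ++ [j]) ≤ M.b u ∧
      M.b (u ++ [j]) - M.a (u ++ [j]) = M.c (k+1) * (M.b u - M.a u) := by
  have h1 := (M.adm_iff.mp hu).1
  have h2 := M.adm_length hu
  have := M.hstep u h1 j hj1 (h2 ▸ hj2)
  rwa [h2] at this

lemma append_adm {k m : ℕ} {w v : List ℕ} (hw : M.Adm k w) (hv : v ∈ MoranAux.D M.n k m) :
    M.Adm (k+m) (w ++ v) := MoranAux.append_mem_D hw hv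

lemma len {k : ℕ} {w : List ℕ} (hw : M.Adm k w) : M.b w - M.a w = M.lam k := by
  induction k generalizing w with
  | zero =>
    have : w = [] := List.length_eq_zero_iff.mp (M.adm_length hw)
    subst this
    rw [M.ha0, M.hb0, M.lam_zero]
  | succ k ih =>
    obtain ⟨u, hu, j, hj, rfl⟩ := M.mem_D_succ.mp hw
    have := (M.step' hu hj.1 hj.2).2.2.2
    rw [this, ih hu, M.lam_succ]

lemma a_lt_b {k : ℕ} {w : List ℕ} (hw : M.Adm k w) : M.a w < M.b w := by
  have := M.len hw
  have := M.lam_pos k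
  linarith

/-- Nesting: prefix intervals contain the longer word's interval. -/
lemma nest {k : ℕ} {w : List ℕ} (hw : M.Adm k w) {j : ℕ} (hj : j ≤ k) :
    M.a (w.take j) ≤ M.a w ∧ M.b w ≤ M.b (w.take j) := by
  induction k generalizing w with
  | zero =>
    have hj0 : j = 0 := Nat.le_zero.mp hj
    subst hj0
    have : w = [] := List.length_eq_zero_iff.mp (M.adm_length hw)
    subst this
    simp
  | succ k ih =>
    obtain ⟨u, hu, j', hj', rfl⟩ := M.mem_D_succ.mp hw
    have hul : u.length = k := M.adm_length hu
    have hstep := M.step' hu hj'.1 hj'.2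
    rcases Nat.lt_or_ge j (k+1) with h | h
    · have hjk : j ≤ k := by omega
      have htake : (u ++ [j']).take j = u.take j :=
        List.take_append_of_le_length (by omega)
      rw [htake]
      have := ih hu hjk
      exact ⟨le_trans this.1 hstep.1, le_trans hstep.2.2.1 this.2⟩
    · have hj1 : j = k + 1 := le_antisymm hj h
      subst hj1
      have htake : (u ++ [j']).take (k+1) = u ++ [j'] := by
        apply List.take_of_length_le
        simp [hul]
      rw [htake]
      exact ⟨le_rfl, le_rfl⟩

lemma take_adm {k j : ℕ} {w : List ℕ} (hw : M.Adm k w) (hj : j ≤ k) :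
    M.Adm j (w.take j) := MoranAux.take_mem_D hw hj

/-- Separation of distinct same-level intervals. -/
lemma separation {k : ℕ} {w w' : List ℕ} (hw : M.Adm k w) (hw' : M.Adm k w')
    (hne : w ≠ w') : M.b w ≤ M.a w' ∨ M.b w' ≤ M.a w := by
  by_contra hcon
  push_neg at hcon
  obtain ⟨h1, h2⟩ := hcon
  have hlw := M.adm_length hw
  have hlw' := M.adm_length hw'
  have hex : ∃ t, w.getD t 0 ≠ w'.getD t 0 := by
    by_contra hall
    push_neg at hall
    apply hne
    apply List.ext_getElem (by omega)
    intro i hi1 hi2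
    have := hall i
    rwa [List.getD_eq_getElem w 0 hi1, List.getD_eq_getElem w' 0 hi2] at this
  classical
  set t₀ := Nat.find hex with ht₀def
  have ht₀ : w.getD t₀ 0 ≠ w'.getD t₀ 0 := Nat.find_spec hex
  have ht₀min : ∀ t, t < t₀ → w.getD t 0 = w'.getD t 0 := by
    intro t ht
    have := Nat.find_min hex ht
    simpa using this
  have ht₀k : t₀ < k := by
    by_contra hge
    push_neg at hge
    apply ht₀
    rw [List.getD_eq_default, List.getD_eq_default] <;> omega
  have htake : w.take t₀ = w'.take t₀ := by
    apply List.ext_getElem (by simp [hlw, hlw'])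
    intro i hi1 hi2
    have hit : i < t₀ := by
      simp only [List.length_take, hlw, lt_min_iff] at hi1
      exact hi1.1
    rw [List.getElem_take, List.getElem_take]
    have := ht₀min i hit
    rwa [List.getD_eq_getElem w 0 (by omega), List.getD_eq_getElem w' 0 (by omega)] at this
  set u := w.take t₀ with hudef
  have hu : M.Adm t₀ u := M.take_adm hw (le_of_lt ht₀k)
  have hul : u.length = t₀ := M.adm_length hu
  set j := w.getD t₀ 0 with hjdef
  set j' := w'.getD t₀ 0 with hj'def
  have hget : w[t₀]? = some j := by
    rw [List.getElem?_eq_getElem (show t₀ < w.length by omega)]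
    rw [hjdef, List.getD_eq_getElem w 0 (show t₀ < w.length by omega)]
  have hget' : w'[t₀]? = some j' := by
    rw [List.getElem?_eq_getElem (show t₀ < w'.length by omega)]
    rw [hj'def, List.getD_eq_getElem w' 0 (show t₀ < w'.length by omega)]
  have hwt : w.take (t₀+1) = u ++ [j] := by
    rw [List.take_succ, hget, hudef]
    rfl
  have hw't : w'.take (t₀+1) = u ++ [j'] := by
    rw [List.take_succ, hget', ← htake]
    rfl
  have hwb := (MoranAux.mem_D_iff.mp hw).2 t₀ (by omega)
  have hw'b := (MoranAux.mem_D_iff.mp hw').2 t₀ (by omega)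
  rw [Nat.zero_add] at hwb hw'b
  have hdis := M.hsep u (M.adm_iff.mp hu).1 j j' hwb.1 (by rw [hul]; exact hwb.2)
    hw'b.1 (by rw [hul]; exact hw'b.2) ht₀
  have hnw := M.nest hw (show t₀+1 ≤ k by omega)
  have hnw' := M.nest hw' (show t₀+1 ≤ k by omega)
  rw [hwt] at hnw
  rw [hw't] at hnw'
  have haw := M.a_lt_b hw
  have haw' := M.a_lt_b hw'
  set z := (max (M.a w) (M.a w') + min (M.b w) (M.b w')) / 2 with hz
  have hmaxmin : max (M.a w) (M.a w') < min (M.b w) (M.b w') := by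
    rcases max_cases (M.a w) (M.a w') with ⟨he, _⟩ | ⟨he, _⟩ <;>
      rcases min_cases (M.b w) (M.b w') with ⟨he', _⟩ | ⟨he', _⟩ <;> rw [he, he'] <;> linarith
  have hz1 : z ∈ interior (Set.Icc (M.a (u ++ [j])) (M.b (u ++ [j]))) := by
    rw [interior_Icc]
    constructor
    · calc M.a (u ++ [j]) ≤ M.a w := hnw.1
        _ ≤ max (M.a w) (M.a w') := le_max_left _ _
        _ < z := by rw [hz]; linarith
    · calc z < min (M.b w) (M.b w') := by rw [hz]; linarith
        _ ≤ M.b w := min_le_left _ _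
        _ ≤ M.b (u ++ [j]) := hnw.2
  have hz2 : z ∈ interior (Set.Icc (M.a (u ++ [j'])) (M.b (u ++ [j']))) := by
    rw [interior_Icc]
    constructor
    · calc M.a (u ++ [j']) ≤ M.a w' := hnw'.1
        _ ≤ max (M.a w) (M.a w') := le_max_right _ _
        _ < z := by rw [hz]; linarith
    · calc z < min (M.b w) (M.b w') := by rw [hz]; linarith
        _ ≤ M.b w' := min_le_right _ _
        _ ≤ M.b (u ++ [j']) := hnw'.2
  have : z ∈ (∅ : Set ℝ) := hdis ▸ Set.mem_inter hz1 hz2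
  exact this

lemma a_sep {k : ℕ} {w w' : List ℕ} (hw : M.Adm k w) (hw' : M.Adm k w')
    (hne : w ≠ w') (hle : M.a w ≤ M.a w') : M.a w + M.lam k ≤ M.a w' := by
  have hlw := M.len hw
  have hlw' := M.len hw'
  rcases M.separation hw hw' hne with h | h
  · linarith
  · linarith

/-- The counting lemma: admissible words of level `k` whose left endpoints lie in a window
of length `m` number at most `m / lam k + 1`. -/
lemma count_in_window {k : ℕ} {S : Finset (List ℕ)} (hS : ∀ v ∈ S, M.Adm k v)
    {u m : ℝ} (hm : 0 ≤ m) (h : ∀ v ∈ S, u ≤ M.a v ∧ M.a v ≤ u + m) :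
    (S.card : ℝ) ≤ m / M.lam k + 1 := by
  classical
  have hlam := M.lam_pos k
  have key : ∀ v ∈ S, ∀ v' ∈ S, M.a v + M.lam k ≤ M.a v' →
      ⌊(M.a v - u)/M.lam k⌋₊ < ⌊(M.a v' - u)/M.lam k⌋₊ := by
    intro v hv v' hv' hsep
    have h0 : 0 ≤ (M.a v - u)/M.lam k := div_nonneg (by linarith [(h v hv).1]) hlam.le
    have h1 : (M.a v - u)/M.lam k + 1 ≤ (M.a v' - u)/M.lam k := by
      have heq : (M.a v - u)/M.lam k + 1 = ((M.a v - u) + M.lam k)/M.lam k := by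
        field_simp
      rw [heq]
      exact (div_le_div_iff_of_pos_right hlam).mpr (by linarith)
    calc ⌊(M.a v - u)/M.lam k⌋₊ < ⌊(M.a v - u)/M.lam k⌋₊ + 1 := Nat.lt_succ_self _
      _ = ⌊(M.a v - u)/M.lam k + 1⌋₊ := (Nat.floor_add_one h0).symm
      _ ≤ ⌊(M.a v' - u)/M.lam k⌋₊ := Nat.floor_le_floor h1
  have hinj : Set.InjOn (fun v => ⌊(M.a v - u)/M.lam k⌋₊) S := by
    intro v hv v' hv' heq
    by_contra hne
    rcases le_total (M.a v) (M.a v') with hle | hle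
    · exact absurd heq (ne_of_lt (key v hv v' hv' (M.a_sep (hS v hv) (hS v' hv') hne hle)))
    · exact absurd heq.symm
        (ne_of_lt (key v' hv' v hv (M.a_sep (hS v' hv') (hS v hv) (Ne.symm hne) hle)))
  have hmap : ∀ v ∈ S, ⌊(M.a v - u)/M.lam k⌋₊ ∈ Finset.range (⌊m/M.lam k⌋₊ + 1) := by
    intro v hv
    rw [Finset.mem_range, Nat.lt_succ_iff]
    apply Nat.floor_le_floor
    exact (div_le_div_iff_of_pos_right hlam).mpr (by linarith [(h v hv).1, (h v hv).2])
  have hcard := Finset.card_le_card_of_injOn _ hmap hinj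
  rw [Finset.card_range] at hcard
  calc (S.card : ℝ) ≤ (⌊m/M.lam k⌋₊ + 1 : ℕ) := by exact_mod_cast hcard
    _ ≤ m / M.lam k + 1 := by
        push_cast
        have := Nat.floor_le (div_nonneg hm hlam.le)
        linarith

lemma replicate_mem_D (k m : ℕ) : List.replicate m 1 ∈ MoranAux.D M.n k m := by
  rw [MoranAux.mem_D_iff]
  refine ⟨List.length_replicate, fun t ht => ?_⟩
  have h1 : (List.replicate m 1).getD t 0 = 1 := by
    rw [List.getD_eq_getElem _ _ (by simpa using ht), List.getElem_replicate]
  rw [h1]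
  exact ⟨le_rfl, le_trans (by norm_num) (M.hn (k+t+1) (by omega))⟩

/-- The canonical point of `E` in the interval of the word `w`. -/
noncomputable def xpt (w : List ℕ) : ℝ := ⨆ m : ℕ, M.a (w ++ List.replicate m 1)

lemma ext_adm {k : ℕ} {w : List ℕ} (hw : M.Adm k w) (m : ℕ) :
    M.Adm (k+m) (w ++ List.replicate m 1) := M.append_adm hw (M.replicate_mem_D k m)

lemma ext_take {k m m' : ℕ} {w : List ℕ} (hw : M.Adm k w) (hmm : m ≤ m') :
    (w ++ List.replicate m' 1).take (k+m) = w ++ List.replicate m 1 := by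
  have hlw : w.length = k := M.adm_length hw
  rw [List.take_append, List.take_of_length_le (by omega),
    List.take_replicate]
  congr 2
  omega

lemma a_ext_mono {k : ℕ} {w : List ℕ} (hw : M.Adm k w) :
    Monotone (fun m => M.a (w ++ List.replicate m 1)) := by
  apply monotone_nat_of_le_succ
  intro m
  have hadm := M.ext_adm hw m
  have h1 : (1:ℕ) ≤ M.n (k+m+1) := le_trans one_le_two (M.hn _ (by omega))
  have h2 := (M.step' hadm le_rfl h1).1
  calc M.a (w ++ List.replicate m 1) ≤ M.a ((w ++ List.replicate m 1) ++ [1]) := h2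
    _ = M.a (w ++ List.replicate (m+1) 1) := by
        rw [List.append_assoc, ← List.replicate_succ']

lemma a_ext_le {k : ℕ} {w : List ℕ} (hw : M.Adm k w) (m m' : ℕ) :
    M.a (w ++ List.replicate m' 1) ≤ M.b (w ++ List.replicate m 1) := by
  rcases le_total m' m with h | h
  · exact le_trans (M.a_ext_mono hw h) (M.a_lt_b (M.ext_adm hw m)).le
  · have hnest := M.nest (M.ext_adm hw m') (show k+m ≤ k+m' by omega)
    rw [M.ext_take hw h] at hnest
    exact le_trans (M.a_lt_b (M.ext_adm hw m')).le hnest.2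

lemma xpt_bdd {k : ℕ} {w : List ℕ} (hw : M.Adm k w) :
    BddAbove (Set.range fun m => M.a (w ++ List.replicate m 1)) := by
  refine ⟨M.b w, ?_⟩
  rintro _ ⟨m, rfl⟩
  have := M.a_ext_le hw 0 m
  simpa using this

lemma le_xpt {k : ℕ} {w : List ℕ} (hw : M.Adm k w) (m : ℕ) :
    M.a (w ++ List.replicate m 1) ≤ M.xpt w := le_ciSup (M.xpt_bdd hw) m

lemma xpt_le {k : ℕ} {w : List ℕ} (hw : M.Adm k w) (m : ℕ) :
    M.xpt w ≤ M.b (w ++ List.replicate m 1) := ciSup_le (fun m' => M.a_ext_le hw m m')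

lemma xpt_mem_Icc {k : ℕ} {w : List ℕ} (hw : M.Adm k w) :
    M.xpt w ∈ Set.Icc (M.a w) (M.b w) := by
  constructor
  · have := M.le_xpt hw 0
    simpa using this
  · have := M.xpt_le hw 0
    simpa using this

lemma xpt_mem_E {k : ℕ} {w : List ℕ} (hw : M.Adm k w) : M.xpt w ∈ M.E := by
  rw [M.hEq, Set.mem_iInter]
  intro k'
  rw [Set.mem_iUnion₂]
  have hadm := M.ext_adm hw k'
  have htk := M.take_adm hadm (show k' ≤ k + k' by omega)
  refine ⟨(w ++ List.replicate k' 1).take k', ?_, ?_, ?_⟩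
  · exact M.adm_iff.mp htk
  · exact le_trans (M.nest hadm (show k' ≤ k + k' by omega)).1 (M.le_xpt hw k')
  · exact le_trans (M.xpt_le hw k') (M.nest hadm (show k' ≤ k + k' by omega)).2

lemma E_mem_level {y : ℝ} (hy : y ∈ M.E) (k : ℕ) :
    ∃ w, M.Adm k w ∧ y ∈ Set.Icc (M.a w) (M.b w) := by
  rw [M.hEq] at hy
  have := Set.mem_iInter.mp hy k
  simp only [Set.mem_iUnion, Set.mem_setOf_eq] at this
  obtain ⟨w, ⟨h1, h2⟩, h3⟩ := this
  exact ⟨w, M.adm_iff.mpr ⟨h1, h2⟩, h3⟩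

lemma E_nonempty : M.E.Nonempty := ⟨M.xpt [], M.xpt_mem_E M.adm_nil⟩

open Classical in
/-- The canonical point as an element of the subtype `↥E`. -/
noncomputable def pt (v : List ℕ) : ↥M.E :=
  if h : MoranAdmissible M.n v then ⟨M.xpt v, M.xpt_mem_E (M.adm_iff.mpr ⟨h, rfl⟩)⟩
  else ⟨M.xpt [], M.xpt_mem_E M.adm_nil⟩

lemma pt_val {k : ℕ} {v : List ℕ} (hv : M.Adm k v) : (M.pt v : ℝ) = M.xpt v := by
  rw [pt]
  rw [dif_pos (M.adm_iff.mp hv).1]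

lemma dist_le_of_mem_Icc {k : ℕ} {v : List ℕ} (hv : M.Adm k v) {y y' : ℝ}
    (hy : y ∈ Set.Icc (M.a v) (M.b v)) (hy' : y' ∈ Set.Icc (M.a v) (M.b v)) :
    |y - y'| ≤ M.lam k := by
  have hlen := M.len hv
  rw [abs_le]
  constructor <;> [skip; skip] <;>
    · simp only [Set.mem_Icc] at hy hy'
      linarith [hy.1, hy.2, hy'.1, hy'.2]

/-- Covering upper bound: the part of `E` within distance `R ≤ lam p` of any point can be
covered by at most `4 · n_{p+1} ⋯ n_q` balls of radius `r ≥ lam q` centred in `E`. -/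
lemma exists_cover {q p : ℕ} (hpq : p ≤ q) (x : ℝ) {r R : ℝ} (hr : M.lam q ≤ r)
    (hR0 : 0 ≤ R) (hRp : R ≤ M.lam p) :
    ∃ s : Finset ↥M.E, s.card ≤ 4 * ∏ i ∈ Finset.Icc (p+1) q, M.n i ∧
      ∀ y : ↥M.E, |(y : ℝ) - x| ≤ R → ∃ z ∈ s, |(y : ℝ) - (z : ℝ)| ≤ r := by
  classical
  set T : Finset (List ℕ) := (MoranAux.D M.n 0 q).filter
    (fun v => M.a v ≤ x + R ∧ x - R ≤ M.b v) with hT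
  have hTadm : ∀ v ∈ T, M.Adm q v := fun v hv => (Finset.mem_filter.mp hv).1
  refine ⟨T.image M.pt, ?_, ?_⟩
  · -- cardinality bound
    have hP' : ∀ u ∈ T.image (List.take p), M.Adm p u := by
      intro u hu
      obtain ⟨v, hv, rfl⟩ := Finset.mem_image.mp hu
      exact M.take_adm (hTadm v hv) hpq
    have hwin : ∀ u ∈ T.image (List.take p),
        x - R - M.lam p ≤ M.a u ∧ M.a u ≤ (x - R - M.lam p) + (2*R + M.lam p) := by
      intro u hu
      obtain ⟨v, hv, rfl⟩ := Finset.mem_image.mp hu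
      have hvT := Finset.mem_filter.mp hv
      have hnest := M.nest (hTadm v hv) hpq
      have hlenu := M.len (M.take_adm (hTadm v hv) hpq)
      have hlenv := M.len (hTadm v hv)
      constructor
      · -- a (take p v) = b (take p v) - lam p ≥ b v - lam p ≥ x - R - lam p
        have : M.b v ≤ M.b (v.take p) := hnest.2
        have hbv : x - R ≤ M.b v := hvT.2.2
        linarith
      · have : M.a (v.take p) ≤ M.a v := hnest.1
        have hav : M.a v ≤ x + R := hvT.2.1
        linarith
    have hcount := M.count_in_window hP' (by linarith [M.lam_pos p]) hwin
    have hsub : T ⊆ (T.image (List.take p)).biUnion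
        (fun u => (MoranAux.D M.n p (q-p)).image (fun v' => u ++ v')) := by
      intro v hv
      rw [Finset.mem_biUnion]
      refine ⟨v.take p, Finset.mem_image_of_mem _ hv, ?_⟩
      rw [Finset.mem_image]
      exact ⟨v.drop p, MoranAux.drop_mem_D (hTadm v hv) hpq, List.take_append_drop p v⟩
    have hcard4 : (T.image (List.take p)).card ≤ 4 := by
      have hlp := M.lam_pos p
      have h3 : (2*R + M.lam p)/M.lam p ≤ 3 := by
        rw [div_le_iff₀ hlp]
        linarith
      have h4 : ((T.image (List.take p)).card : ℝ) ≤ 4 := by linarith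
      exact_mod_cast h4
    calc (T.image M.pt).card ≤ T.card := Finset.card_image_le
      _ ≤ ((T.image (List.take p)).biUnion
          (fun u => (MoranAux.D M.n p (q-p)).image (fun v' => u ++ v'))).card :=
        Finset.card_le_card hsub
      _ ≤ ∑ u ∈ T.image (List.take p),
          ((MoranAux.D M.n p (q-p)).image (fun v' => u ++ v')).card := Finset.card_biUnion_le
      _ ≤ ∑ u ∈ T.image (List.take p), (MoranAux.D M.n p (q-p)).card := by
          apply Finset.sum_le_sum
          intro u _
          exact Finset.card_image_le
      _ = (T.image (List.take p)).card * (MoranAux.D M.n p (q-p)).card := by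
          rw [Finset.sum_const, smul_eq_mul]
      _ ≤ 4 * (MoranAux.D M.n p (q-p)).card := Nat.mul_le_mul_right _ hcard4
      _ = 4 * ∏ i ∈ Finset.Icc (p+1) q, M.n i := by
          rw [MoranAux.card_D (fun i hi => le_trans one_le_two (M.hn i hi)) p (q-p),
            Finset.Icc_add_one_left_eq_Ioc, Nat.add_sub_cancel' hpq]
  · -- covering property
    intro y hy
    obtain ⟨w, hw, hyw⟩ := M.E_mem_level y.2 q
    have hwT : w ∈ T := by
      rw [hT, Finset.mem_filter]
      refine ⟨hw, ?_, ?_⟩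
      · have := hyw.1
        have := abs_le.mp hy
        linarith [this.1, this.2]
      · have := hyw.2
        have h2 := abs_le.mp hy
        linarith [h2.1, h2.2]
    refine ⟨M.pt w, Finset.mem_image_of_mem _ hwT, ?_⟩
    rw [M.pt_val hw]
    exact le_trans (M.dist_le_of_mem_Icc hw hyw (M.xpt_mem_Icc hw)) hr

lemma mem_cb {x z : ↥M.E} {R : ℝ} : z ∈ Metric.closedBall x R ↔ |(z:ℝ) - (x:ℝ)| ≤ R := by
  rw [Metric.mem_closedBall, Subtype.dist_eq, Real.dist_eq]

lemma total_cover {r : ℝ} {q : ℕ} (hr : M.lam q ≤ r) (x : ↥M.E) (R : ℝ) :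
    ((MoranAux.D M.n 0 q).image M.pt).card ∈ {m : ℕ | ∃ s : Finset ↥M.E, s.card = m ∧
      Metric.closedBall x R ⊆ ⋃ y ∈ s, Metric.closedBall y r} := by
  refine ⟨_, rfl, ?_⟩
  intro z _
  obtain ⟨w, hw, hzw⟩ := M.E_mem_level z.2 q
  rw [Set.mem_iUnion₂]
  refine ⟨M.pt w, Finset.mem_image_of_mem _ hw, ?_⟩
  rw [M.mem_cb, M.pt_val hw]
  exact le_trans (M.dist_le_of_mem_Icc hw hzw (M.xpt_mem_Icc hw)) hr

lemma coverNum_le {q p : ℕ} (hpq : p ≤ q) {r R : ℝ} (hr : M.lam q ≤ r) (hR0 : 0 ≤ R)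
    (hRp : R ≤ M.lam p) :
    coverNum ↥M.E r R ≤ 4 * ∏ i ∈ Finset.Icc (p+1) q, M.n i := by
  apply csSup_le'
  rintro m ⟨x, rfl⟩
  obtain ⟨s, hcard, hcover⟩ := M.exists_cover hpq (x:ℝ) hr hR0 hRp
  refine le_trans (Nat.sInf_le ⟨s, rfl, ?_⟩) hcard
  intro z hz
  rw [M.mem_cb] at hz
  obtain ⟨y, hy, hd⟩ := hcover z hz
  rw [Set.mem_iUnion₂]
  exact ⟨y, hy, M.mem_cb.mpr hd⟩

lemma le_coverNum {q p' : ℕ} (hp'1 : 1 ≤ p') (hpq : p' ≤ q) {R : ℝ}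
    (hR : M.lam (p'-1) ≤ R) :
    ∏ i ∈ Finset.Icc p' q, M.n i ≤ 4 * coverNum ↥M.E (M.lam q) R := by
  classical
  set w : List ℕ := List.replicate (p'-1) 1 with hwdef
  have hw : M.Adm (p'-1) w := M.replicate_mem_D 0 (p'-1)
  set x := M.pt w with hxdef
  have hxval : (x:ℝ) = M.xpt w := M.pt_val hw
  set Sx := {m : ℕ | ∃ s : Finset ↥M.E, s.card = m ∧
      Metric.closedBall x R ⊆ ⋃ y ∈ s, Metric.closedBall y (M.lam q)} with hSx
  have hSxne : Sx.Nonempty := ⟨_, M.total_cover le_rfl x R⟩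
  -- the extension words
  set Dext := (MoranAux.D M.n (p'-1) (q-(p'-1))).image (fun v => w ++ v) with hDext
  have hqeq : (p'-1) + (q-(p'-1)) = q := by omega
  have hDadm : ∀ v' ∈ Dext, M.Adm q v' := by
    intro v' hv'
    obtain ⟨v, hv, rfl⟩ := Finset.mem_image.mp hv'
    have := M.append_adm hw hv
    rwa [hqeq] at this
  have hDcard : Dext.card = ∏ i ∈ Finset.Icc p' q, M.n i := by
    rw [hDext, Finset.card_image_of_injective _ (fun v v' h => List.append_cancel_left h),
      MoranAux.card_D (fun i hi => le_trans one_le_two (M.hn i hi)), hqeq,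
      ← Finset.Icc_add_one_left_eq_Ioc]
    have hps : Finset.Icc (p'-1).succ q = Finset.Icc p' q := by
      congr 1
      omega
    rw [← Nat.succ_eq_add_one, hps]
  have hxin : ∀ v' ∈ Dext, M.xpt v' ∈ Set.Icc (M.a w) (M.b w) := by
    intro v' hv'
    have hv'q := hDadm v' hv'
    have hmem := M.xpt_mem_Icc hv'q
    obtain ⟨v, hv, rfl⟩ := Finset.mem_image.mp hv'
    have hnest := M.nest hv'q (show p'-1 ≤ q by omega)
    have htk : (w ++ v).take (p'-1) = w := by
      rw [← List.length_replicate (n := p'-1) (a := 1), ← hwdef, List.take_left]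
    rw [htk] at hnest
    exact ⟨le_trans hnest.1 hmem.1, le_trans hmem.2 hnest.2⟩
  have key : ∀ m ∈ Sx, ∏ i ∈ Finset.Icc p' q, M.n i ≤ 4 * m := by
    rintro m ⟨s, rfl, hcov⟩
    -- map each extension word to a ball covering its point
    have hex : ∀ v' ∈ Dext, ∃ z ∈ s, M.pt v' ∈ Metric.closedBall z (M.lam q) := by
      intro v' hv'
      have h1 : M.pt v' ∈ Metric.closedBall x R := by
        rw [M.mem_cb, M.pt_val (hDadm v' hv'), hxval]
        exact le_trans (M.dist_le_of_mem_Icc hw (hxin v' hv') (M.xpt_mem_Icc hw)) hR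
      have := hcov h1
      rw [Set.mem_iUnion₂] at this
      obtain ⟨z, hz, hmem⟩ := this
      exact ⟨z, hz, hmem⟩
    set F : List ℕ → ↥M.E := fun v' =>
      if h : ∃ z ∈ s, M.pt v' ∈ Metric.closedBall z (M.lam q) then h.choose else x with hF
    have hFmem : ∀ v' ∈ Dext, F v' ∈ s ∧ |M.xpt v' - (F v' : ℝ)| ≤ M.lam q := by
      intro v' hv'
      have h := hex v' hv'
      rw [hF]
      simp only [dif_pos h]
      obtain ⟨hz, hmem⟩ := h.choose_spec
      refine ⟨hz, ?_⟩
      rw [M.mem_cb, M.pt_val (hDadm v' hv')] at hmem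
      exact hmem
    have hsub : Dext ⊆ s.biUnion (fun z => Dext.filter (fun v' => F v' = z)) := by
      intro v' hv'
      rw [Finset.mem_biUnion]
      exact ⟨F v', (hFmem v' hv').1, Finset.mem_filter.mpr ⟨hv', rfl⟩⟩
    have hfiber : ∀ z ∈ s, (Dext.filter (fun v' => F v' = z)).card ≤ 4 := by
      intro z _
      have hlq := M.lam_pos q
      have hwin : ∀ v' ∈ Dext.filter (fun v' => F v' = z),
          (z:ℝ) - 2*M.lam q ≤ M.a v' ∧ M.a v' ≤ ((z:ℝ) - 2*M.lam q) + 3*M.lam q := by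
        intro v' hv'
        have hv'D := (Finset.mem_filter.mp hv').1
        have hFz : F v' = z := (Finset.mem_filter.mp hv').2
        have hd := (hFmem v' hv'D).2
        rw [hFz] at hd
        have hxi := M.xpt_mem_Icc (hDadm v' hv'D)
        have hlen := M.len (hDadm v' hv'D)
        have habs := abs_le.mp hd
        constructor
        · have h5 : M.a v' ≥ M.xpt v' - M.lam q := by
            have := hxi.2
            linarith
          linarith [habs.1]
        · have h5 : M.a v' ≤ M.xpt v' := hxi.1
          linarith [habs.2]
      have hcount := M.count_in_window
        (fun v' hv' => hDadm v' (Finset.mem_filter.mp hv').1)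
        (show (0:ℝ) ≤ 3 * M.lam q by linarith) hwin
      have h3 : (3 * M.lam q)/M.lam q = 3 := by
        field_simp
      have h4 : ((Dext.filter (fun v' => F v' = z)).card : ℝ) ≤ 4 := by linarith
      exact_mod_cast h4
    calc ∏ i ∈ Finset.Icc p' q, M.n i = Dext.card := hDcard.symm
      _ ≤ (s.biUnion (fun z => Dext.filter (fun v' => F v' = z))).card :=
        Finset.card_le_card hsub
      _ ≤ ∑ z ∈ s, (Dext.filter (fun v' => F v' = z)).card := Finset.card_biUnion_le
      _ ≤ ∑ _z ∈ s, 4 := Finset.sum_le_sum hfiber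
      _ = 4 * s.card := by rw [Finset.sum_const, smul_eq_mul, mul_comm]
  have h1 : ∏ i ∈ Finset.Icc p' q, M.n i ≤ 4 * sInf Sx := key _ (Nat.sInf_mem hSxne)
  have h2 : sInf Sx ≤ coverNum ↥M.E (M.lam q) R := by
    have hb : BddAbove {nn : ℕ | ∃ x' : ↥M.E, nn = sInf {m : ℕ | ∃ s : Finset ↥M.E,
        s.card = m ∧ Metric.closedBall x' R ⊆ ⋃ y ∈ s, Metric.closedBall y (M.lam q)}} := by
      refine ⟨((MoranAux.D M.n 0 q).image M.pt).card, ?_⟩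
      rintro mm ⟨x', rfl⟩
      exact Nat.sInf_le (M.total_cover le_rfl x' R)
    exact le_csSup hb ⟨x, rfl⟩
  omega

/-! ### Logarithmic quantities -/

/-- `gam q = -log (c₁ ⋯ c_q)`. -/
noncomputable def gam (q : ℕ) : ℝ := -Real.log (∏ i ∈ Finset.Icc 1 q, M.c i)

lemma gam_zero : M.gam 0 = 0 := by simp [gam]

lemma log_c_le {i : ℕ} (hi : 1 ≤ i) : Real.log (M.c i) ≤ -Real.log 2 := by
  have h1 := M.c_pos hi
  have h2 := M.c_le_half hi
  calc Real.log (M.c i) ≤ Real.log (1/2) := Real.log_le_log h1 h2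
    _ = -Real.log 2 := by rw [one_div, Real.log_inv]

lemma gam_succ (k : ℕ) : M.gam (k+1) = M.gam k - Real.log (M.c (k+1)) := by
  unfold gam
  rw [Finset.prod_Icc_succ_top (Nat.le_add_left 1 k),
    Real.log_mul (ne_of_gt (M.prod_c_pos 1 k le_rfl)) (ne_of_gt (M.c_pos (Nat.le_add_left 1 k)))]
  ring

lemma gam_ge (q : ℕ) : (q : ℝ) * Real.log 2 ≤ M.gam q := by
  induction q with
  | zero => simp [M.gam_zero]
  | succ q ih =>
    rw [M.gam_succ]
    have := M.log_c_le (Nat.le_add_left 1 q)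
    push_cast
    linarith

lemma gam_mono : Monotone M.gam := by
  apply monotone_nat_of_le_succ
  intro k
  rw [M.gam_succ]
  have h1 := M.log_c_le (Nat.le_add_left 1 k)
  have h2 := Real.log_pos (by norm_num : (1:ℝ) < 2)
  linarith

lemma gam_pos {q : ℕ} (hq : 1 ≤ q) : 0 < M.gam q := by
  have := M.gam_ge q
  have h2 := Real.log_pos (by norm_num : (1:ℝ) < 2)
  have : (1:ℝ) ≤ (q:ℝ) := by exact_mod_cast hq
  nlinarith [M.gam_ge q]

lemma gam_nonneg (q : ℕ) : 0 ≤ M.gam q := by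
  rcases Nat.eq_zero_or_pos q with h | h
  · simp [h, M.gam_zero]
  · exact (M.gam_pos h).le

lemma gam_tendsto : Filter.Tendsto M.gam Filter.atTop Filter.atTop := by
  apply Filter.tendsto_atTop_mono M.gam_ge
  have h2 := Real.log_pos (by norm_num : (1:ℝ) < 2)
  exact Filter.Tendsto.atTop_mul_const h2 tendsto_natCast_atTop_atTop

lemma exists_gam_large (Cst : ℝ) : ∃ Q : ℕ, ∀ q ≥ Q, Cst ≤ M.gam q := by
  have := M.gam_tendsto.eventually_ge_atTop Cst
  rw [Filter.eventually_atTop] at this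
  obtain ⟨Q, hQ⟩ := this
  exact ⟨Q, hQ⟩

lemma log_lam (q : ℕ) : Real.log (M.lam q) = -M.gam q + Real.log (M.B - M.A) := by
  unfold lam gam
  rw [Real.log_mul (ne_of_gt (M.prod_c_pos 1 q le_rfl)) (ne_of_gt M.Lpos)]
  ring

lemma Icc_one_eq_Ioc (m : ℕ) : Finset.Icc 1 m = Finset.Ioc 0 m := rfl

lemma gam_window {p q : ℕ} (hp : 1 ≤ p) (hpq : p - 1 ≤ q) :
    -Real.log (∏ i ∈ Finset.Icc p q, M.c i) = M.gam q - M.gam (p-1) := by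
  have hsplit : (∏ i ∈ Finset.Ioc 0 (p-1), M.c i) * (∏ i ∈ Finset.Ioc (p-1) q, M.c i)
      = ∏ i ∈ Finset.Ioc 0 q, M.c i := Finset.prod_Ioc_consecutive _ (Nat.zero_le _) hpq
  have hIcc : Finset.Icc p q = Finset.Ioc (p-1) q := by
    rw [← Finset.Icc_add_one_left_eq_Ioc]
    congr 1
    omega
  unfold gam
  rw [hIcc, Icc_one_eq_Ioc, Icc_one_eq_Ioc, ← hsplit,
    Real.log_mul (ne_of_gt ?h1) (ne_of_gt ?h2)]
  · ring
  case h1 =>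
    have := M.prod_c_pos 1 (p-1) le_rfl
    rwa [Icc_one_eq_Ioc] at this
  case h2 =>
    have := M.prod_c_pos p q hp
    rwa [hIcc] at this

lemma gam_window_ge {p q : ℕ} (hp : 1 ≤ p) (hpq : p ≤ q) :
    Real.log 2 ≤ M.gam q - M.gam (p-1) := by
  rw [← M.gam_window hp (by omega)]
  have hprod : ∏ i ∈ Finset.Icc p q, M.c i ≤ (1/2)^(Finset.Icc p q).card := by
    rw [← Finset.prod_const]
    exact Finset.prod_le_prod (fun i hi => (M.c_pos (le_trans hp (Finset.mem_Icc.mp hi).1)).le)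
      (fun i hi => M.c_le_half (le_trans hp (Finset.mem_Icc.mp hi).1))
  have hcard : 1 ≤ (Finset.Icc p q).card := by
    rw [Nat.card_Icc]
    omega
  have hlog : Real.log (∏ i ∈ Finset.Icc p q, M.c i)
      ≤ ((Finset.Icc p q).card : ℝ) * Real.log (1/2) := by
    calc Real.log (∏ i ∈ Finset.Icc p q, M.c i) ≤ Real.log ((1/2)^(Finset.Icc p q).card) :=
        Real.log_le_log (M.prod_c_pos p q hp) hprod
      _ = ((Finset.Icc p q).card : ℝ) * Real.log (1/2) := by rw [Real.log_pow]
  have h2 : Real.log (1/2) = -Real.log 2 := by rw [one_div, Real.log_inv]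
  rw [h2] at hlog
  have hc1 : (1:ℝ) ≤ ((Finset.Icc p q).card : ℝ) := by exact_mod_cast hcard
  have hl2 := Real.log_pos (by norm_num : (1:ℝ) < 2)
  nlinarith

lemma gam_window_pos {p q : ℕ} (hp : 1 ≤ p) (hpq : p ≤ q) : 0 < M.gam q - M.gam (p-1) :=
  lt_of_lt_of_le (Real.log_pos (by norm_num)) (M.gam_window_ge hp hpq)

/-- `logN p q = log (n_p ⋯ n_q)`. -/
noncomputable def logN (p q : ℕ) : ℝ := Real.log (∏ i ∈ Finset.Icc p q, (M.n i : ℝ))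

lemma prod_n_ge_one {p q : ℕ} (hp : 1 ≤ p) : (1:ℝ) ≤ ∏ i ∈ Finset.Icc p q, (M.n i : ℝ) := by
  have h := Finset.prod_le_prod (f := fun _ => (1:ℝ)) (g := fun i => (M.n i : ℝ))
    (s := Finset.Icc p q) (by intro i _; norm_num)
    (by
      intro i hi
      have h2 := M.hn i (le_trans hp (Finset.mem_Icc.mp hi).1)
      show (1:ℝ) ≤ (M.n i : ℝ)
      have h3 : (2:ℝ) ≤ (M.n i : ℝ) := by exact_mod_cast h2
      linarith)
  simpa using h

lemma logN_nonneg {p q : ℕ} (hp : 1 ≤ p) : 0 ≤ M.logN p q :=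
  Real.log_nonneg (M.prod_n_ge_one hp)

lemma logN_le {p q : ℕ} (hp : 1 ≤ p) (hpq : p - 1 ≤ q) :
    M.logN p q ≤ M.gam q - M.gam (p-1) := by
  rw [← M.gam_window hp hpq]
  unfold logN
  have hle : ∏ i ∈ Finset.Icc p q, (M.n i : ℝ) ≤ ∏ i ∈ Finset.Icc p q, (M.c i)⁻¹ := by
    apply Finset.prod_le_prod
    · intro i hi
      have := M.hn i (le_trans hp (Finset.mem_Icc.mp hi).1)
      have : (2:ℝ) ≤ (M.n i : ℝ) := by exact_mod_cast this
      linarith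
    · intro i hi
      have hi1 := le_trans hp (Finset.mem_Icc.mp hi).1
      have h1 := (M.hc i hi1).2
      have h2 := M.c_pos hi1
      have h3 : (0:ℝ) < (M.n i : ℝ) := by
        have := M.hn i hi1
        exact_mod_cast lt_of_lt_of_le (by norm_num) this
      rw [le_inv_comm₀ h3 h2, ← one_div]
      exact h1
  calc M.logN p q ≤ Real.log (∏ i ∈ Finset.Icc p q, (M.c i)⁻¹) := by
        apply Real.log_le_log (lt_of_lt_of_le one_pos (M.prod_n_ge_one hp)) hle
      _ = -Real.log (∏ i ∈ Finset.Icc p q, M.c i) := by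
        rw [Finset.prod_inv_distrib, Real.log_inv]

lemma spq_eq {p q : ℕ} (hp : 1 ≤ p) (hpq : p - 1 ≤ q) :
    spq M.n M.c p q = M.logN p q / (M.gam q - M.gam (p-1)) := by
  rw [spq, M.gam_window hp hpq]
  rfl

lemma spq_nonneg {p q : ℕ} (hp : 1 ≤ p) (hpq : p ≤ q) : 0 ≤ spq M.n M.c p q := by
  rw [M.spq_eq hp (by omega)]
  exact div_nonneg (M.logN_nonneg hp) (M.gam_window_pos hp hpq).le

lemma spq_le_one {p q : ℕ} (hp : 1 ≤ p) (hpq : p ≤ q) : spq M.n M.c p q ≤ 1 := by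
  rw [M.spq_eq hp (by omega)]
  rw [div_le_one (M.gam_window_pos hp hpq)]
  exact M.logN_le hp (by omega)

lemma logN_eq_spq {p q : ℕ} (hp : 1 ≤ p) (hpq : p ≤ q) :
    M.logN p q = spq M.n M.c p q * (M.gam q - M.gam (p-1)) := by
  rw [M.spq_eq hp (by omega), div_mul_cancel₀]
  exact ne_of_gt (M.gam_window_pos hp hpq)

/-- Reformulation of the hypothesis `hlim`. -/
lemma hlim' (hlim : Filter.Tendsto
      (fun k : ℕ => Real.log (M.c k) / Real.log (∏ i ∈ Finset.Icc 1 k, M.c i))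
      Filter.atTop (𝓝 0)) {ε : ℝ} (hε : 0 < ε) :
    ∃ K : ℕ, 1 ≤ K ∧ ∀ k, K ≤ k → M.gam k - M.gam (k-1) ≤ ε * M.gam k := by
  have hev := hlim.eventually (gt_mem_nhds hε)
  rw [Filter.eventually_atTop] at hev
  obtain ⟨K₀, hK₀⟩ := hev
  refine ⟨max K₀ 1, le_max_right _ _, fun k hk => ?_⟩
  have hk1 : 1 ≤ k := le_trans (le_max_right _ _) hk
  have hkK : K₀ ≤ k := le_trans (le_max_left _ _) hk
  have hratio := hK₀ k hkK
  have hgam : 0 < M.gam k := M.gam_pos hk1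
  have hlog : Real.log (∏ i ∈ Finset.Icc 1 k, M.c i) = -M.gam k := by
    unfold gam
    ring
  have hlogc : Real.log (M.c k) = -(M.gam k - M.gam (k-1)) := by
    have := M.gam_succ (k-1)
    have hke : k - 1 + 1 = k := by omega
    rw [hke] at this
    linarith
  rw [hlog, hlogc] at hratio
  rw [neg_div_neg_eq, div_lt_iff₀ hgam] at hratio
  linarith

end MD

/-- The inner supremum in the main formula. -/
noncomputable def Mfun (n : ℕ → ℕ) (c : ℕ → ℝ) (δ : ℝ) (q : ℕ) : ℝ :=
  sSup {s : ℝ | ∃ p : ℕ, 1 ≤ p ∧ p ≤ lIdx c δ q ∧ s = spq n c p q}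

/-- The limsup in the main formula. -/
noncomputable def SSfun (n : ℕ → ℕ) (c : ℕ → ℝ) (δ : ℝ) : ℝ :=
  Filter.limsup (fun q => Mfun n c δ q) Filter.atTop

namespace MD

variable (M : MD)

lemma ratio_eq {p q : ℕ} (hp : 1 ≤ p) (hpq : p - 1 ≤ q) :
    Real.log (∏ i ∈ Finset.Icc p q, M.c i) / Real.log (∏ i ∈ Finset.Icc 1 q, M.c i)
      = (M.gam q - M.gam (p-1)) / M.gam q := by
  have h1 : Real.log (∏ i ∈ Finset.Icc p q, M.c i) = -(M.gam q - M.gam (p-1)) := by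
    have := M.gam_window hp hpq
    linarith
  have h2 : Real.log (∏ i ∈ Finset.Icc 1 q, M.c i) = -M.gam q := by
    unfold gam
    ring
  rw [h1, h2, neg_div_neg_eq]

lemma lIdx_le (δ : ℝ) (q : ℕ) : lIdx M.c δ q ≤ q := by
  apply csSup_le'
  rintro p ⟨_, hp2, _⟩
  exact hp2

lemma one_mem_Lset {δ : ℝ} (hδ : δ < 1) {q : ℕ} (hq : 1 ≤ q) :
    1 ∈ {p : ℕ | 1 ≤ p ∧ p ≤ q ∧ δ < Real.log (∏ i ∈ Finset.Icc p q, M.c i) /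
      Real.log (∏ i ∈ Finset.Icc 1 q, M.c i)} := by
  refine ⟨le_rfl, hq, ?_⟩
  rw [M.ratio_eq le_rfl (by omega)]
  have h1 : (M.gam q - M.gam (1-1)) / M.gam q = 1 := by
    norm_num [M.gam_zero]
    exact ne_of_gt (M.gam_pos hq)
  rw [h1]
  exact hδ

lemma Lset_bdd (δ : ℝ) (q : ℕ) : BddAbove {p : ℕ | 1 ≤ p ∧ p ≤ q ∧
    δ < Real.log (∏ i ∈ Finset.Icc p q, M.c i) /
      Real.log (∏ i ∈ Finset.Icc 1 q, M.c i)} :=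
  ⟨q, fun p hp => hp.2.1⟩

lemma one_le_lIdx {δ : ℝ} (hδ : δ < 1) {q : ℕ} (hq : 1 ≤ q) : 1 ≤ lIdx M.c δ q :=
  le_csSup (M.Lset_bdd δ q) (M.one_mem_Lset hδ hq)

lemma lIdx_cond {δ : ℝ} (hδ : δ < 1) {q : ℕ} (hq : 1 ≤ q) {p : ℕ} (hp : 1 ≤ p)
    (hpl : p ≤ lIdx M.c δ q) : δ < (M.gam q - M.gam (p-1)) / M.gam q := by
  have hmem : lIdx M.c δ q ∈ {p : ℕ | 1 ≤ p ∧ p ≤ q ∧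
      δ < Real.log (∏ i ∈ Finset.Icc p q, M.c i) /
        Real.log (∏ i ∈ Finset.Icc 1 q, M.c i)} :=
    Nat.sSup_mem ⟨1, M.one_mem_Lset hδ hq⟩ (M.Lset_bdd δ q)
  obtain ⟨hl1, hlq, hlr⟩ := hmem
  rw [M.ratio_eq hl1 (by omega)] at hlr
  have hmono : M.gam (p-1) ≤ M.gam (lIdx M.c δ q - 1) := M.gam_mono (by omega)
  have hgq := M.gam_pos hq
  calc δ < (M.gam q - M.gam (lIdx M.c δ q - 1)) / M.gam q := hlr
    _ ≤ (M.gam q - M.gam (p-1)) / M.gam q :=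
        (div_le_div_iff_of_pos_right hgq).mpr (by linarith)

lemma le_lIdx {δ : ℝ} {q : ℕ} (hq : 1 ≤ q) {p : ℕ} (hp : 1 ≤ p) (hpq : p ≤ q)
    (hr : δ < (M.gam q - M.gam (p-1)) / M.gam q) : p ≤ lIdx M.c δ q := by
  apply le_csSup (M.Lset_bdd δ q)
  refine ⟨hp, hpq, ?_⟩
  rw [M.ratio_eq hp (by omega)]
  exact hr

lemma Mfun_bdd (δ : ℝ) (q : ℕ) : BddAbove
    {s : ℝ | ∃ p : ℕ, 1 ≤ p ∧ p ≤ lIdx M.c δ q ∧ s = spq M.n M.c p q} := by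
  refine ⟨1, ?_⟩
  rintro s ⟨p', hp1', hp2', rfl⟩
  exact M.spq_le_one hp1' (le_trans hp2' (M.lIdx_le δ q))

lemma Mfun_nonneg (δ : ℝ) (q : ℕ) : 0 ≤ Mfun M.n M.c δ q := by
  rcases Set.eq_empty_or_nonempty
      {s : ℝ | ∃ p : ℕ, 1 ≤ p ∧ p ≤ lIdx M.c δ q ∧ s = spq M.n M.c p q} with h | h
  · rw [Mfun, h, Real.sSup_empty]
  · obtain ⟨s, p, hp1, hp2, rfl⟩ := h
    have hpq : p ≤ q := le_trans hp2 (M.lIdx_le δ q)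
    exact le_trans (M.spq_nonneg hp1 hpq) (le_csSup (M.Mfun_bdd δ q) ⟨p, hp1, hp2, rfl⟩)

lemma Mfun_le_one (δ : ℝ) (q : ℕ) : Mfun M.n M.c δ q ≤ 1 := by
  apply Real.sSup_le _ zero_le_one
  rintro s ⟨p', hp1', hp2', rfl⟩
  exact M.spq_le_one hp1' (le_trans hp2' (M.lIdx_le δ q))

lemma le_Mfun {δ : ℝ} {q p : ℕ} (hp : 1 ≤ p) (hpl : p ≤ lIdx M.c δ q) :
    spq M.n M.c p q ≤ Mfun M.n M.c δ q :=
  le_csSup (M.Mfun_bdd δ q) ⟨p, hp, hpl, rfl⟩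

lemma Mfun_le {δ B' : ℝ} {q : ℕ} (hB : 0 ≤ B')
    (h : ∀ p, 1 ≤ p → p ≤ lIdx M.c δ q → spq M.n M.c p q ≤ B') :
    Mfun M.n M.c δ q ≤ B' := by
  apply Real.sSup_le _ hB
  rintro s ⟨p', hp1', hp2', rfl⟩
  exact h p' hp1' hp2'

lemma Mfun_bddUnder (δ : ℝ) : Filter.IsBoundedUnder (· ≤ ·) Filter.atTop
    (fun q => Mfun M.n M.c δ q) :=
  Filter.isBoundedUnder_of ⟨1, fun q => M.Mfun_le_one δ q⟩

lemma Mfun_bddUnder_ge (δ : ℝ) : Filter.IsBoundedUnder (· ≥ ·) Filter.atTop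
    (fun q => Mfun M.n M.c δ q) :=
  Filter.isBoundedUnder_of ⟨0, fun q => M.Mfun_nonneg δ q⟩

lemma Mfun_cobdd (δ : ℝ) : Filter.IsCoboundedUnder (· ≤ ·) Filter.atTop
    (fun q => Mfun M.n M.c δ q) :=
  (M.Mfun_bddUnder_ge δ).isCoboundedUnder_le

lemma SSfun_nonneg (δ : ℝ) : 0 ≤ SSfun M.n M.c δ := by
  apply Filter.le_limsup_of_frequently_le
    (Filter.Eventually.frequently (Filter.Eventually.of_forall (fun q => M.Mfun_nonneg δ q)))
    (M.Mfun_bddUnder δ)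

lemma SSfun_le_one (δ : ℝ) : SSfun M.n M.c δ ≤ 1 :=
  Filter.limsup_le_of_le (M.Mfun_cobdd δ)
    (Filter.Eventually.of_forall (fun q => M.Mfun_le_one δ q))


/-- Main upper estimate: any `α` above `SSfun δ'` is a valid quasi-Assouad exponent
at parameter `δ > δ'`. -/
lemma mem_hFunSet (hlim : Filter.Tendsto
      (fun k : ℕ => Real.log (M.c k) / Real.log (∏ i ∈ Finset.Icc 1 k, M.c i))
      Filter.atTop (𝓝 0))
    {δ' δ : ℝ} (h0 : 0 < δ') (h1 : δ' < δ) (h2 : δ < 1) {α : ℝ}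
    (hα : SSfun M.n M.c δ' < α) :
    0 ≤ α ∧ ∃ b c' : ℝ, 0 < b ∧ 0 < c' ∧ ∀ r R : ℝ,
      0 < r → r < r ^ (1 - δ) → r ^ (1 - δ) ≤ R → R < b →
        (coverNum ↥M.E r R : ℝ) ≤ c' * (R / r) ^ α := by
  have hδ0 : 0 < δ := lt_trans h0 h1
  have hσ0 : 0 ≤ SSfun M.n M.c δ' := M.SSfun_nonneg δ'
  set α₀ : ℝ := (SSfun M.n M.c δ' + α)/2 with hα₀def
  have hα₀1 : SSfun M.n M.c δ' < α₀ := by rw [hα₀def]; linarith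
  have hα₀2 : α₀ < α := by rw [hα₀def]; linarith
  have hα₀0 : 0 ≤ α₀ := by linarith
  refine ⟨by linarith, ?_⟩
  set logL : ℝ := |Real.log (M.B - M.A)| with hlogL
  have hlogL0 : 0 ≤ logL := abs_nonneg _
  set ε : ℝ := min (δ * (α - α₀) / (6 * (α₀ + 1))) (1/2) with hεdef
  have hε0 : 0 < ε := by
    apply lt_min _ (by norm_num)
    apply div_pos (by nlinarith) (by nlinarith)
  have hεhalf : ε ≤ 1/2 := min_le_right _ _
  have hεkey : 6 * (α₀ + 1) * ε ≤ δ * (α - α₀) := by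
    have h6 : (0:ℝ) < 6 * (α₀ + 1) := by nlinarith
    have hthis : ε ≤ δ * (α - α₀) / (6 * (α₀ + 1)) := min_le_left _ _
    rw [le_div_iff₀ h6] at hthis
    linarith
  -- eventual bound on Mfun
  have hev : ∀ᶠ q in Filter.atTop, Mfun M.n M.c δ' q < α₀ :=
    Filter.eventually_lt_of_limsup_lt hα₀1 (M.Mfun_bddUnder δ')
  rw [Filter.eventually_atTop] at hev
  obtain ⟨Q₁, hQ₁⟩ := hev
  obtain ⟨K, hK1, hK⟩ := M.hlim' hlim hε0
  obtain ⟨Q₂, hQ₂⟩ := M.exists_gam_large ((δ * logL + 1)/(δ - δ'))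
  obtain ⟨Q₄, hQ₄⟩ := M.exists_gam_large (6 * logL + 1)
  set P : ℕ := max (max Q₁ K) (max Q₂ Q₄) + 1 with hPdef
  refine ⟨M.lam P, 4, M.lam_pos P, by norm_num, ?_⟩
  intro r R hr0 hrr hrR hRb
  have hR0 : 0 < R := lt_of_lt_of_le (Real.rpow_pos_of_pos hr0 _) hrR
  have hrRlt : r < R := lt_of_lt_of_le hrr hrR
  -- choose q minimal with lam q ≤ r
  have hqex : ∃ k, M.lam k ≤ r := by
    have := M.lam_tendsto.eventually_le_const hr0
    rw [Filter.eventually_atTop] at this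
    obtain ⟨k, hk⟩ := this
    exact ⟨k, hk k le_rfl⟩
  classical
  set q : ℕ := Nat.find hqex with hqdef
  have hq : M.lam q ≤ r := Nat.find_spec hqex
  have hqmin : ∀ k, k < q → r < M.lam k := by
    intro k hk
    have := Nat.find_min hqex hk
    push_neg at this
    exact this
  -- choose p maximal with R ≤ lam p
  have hpbd : ∃ k₀, ∀ k, R ≤ M.lam k → k ≤ k₀ := by
    have := M.lam_tendsto.eventually_lt_const hR0
    rw [Filter.eventually_atTop] at this
    obtain ⟨k₀, hk₀⟩ := this
    refine ⟨k₀, fun k hk => ?_⟩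
    by_contra hgt
    push_neg at hgt
    have := hk₀ k hgt.le
    linarith
  obtain ⟨k₀, hk₀⟩ := hpbd
  have hSpne : {k : ℕ | R ≤ M.lam k}.Nonempty := ⟨P, hRb.le⟩
  have hSpbdd : BddAbove {k : ℕ | R ≤ M.lam k} := ⟨k₀, fun k hk => hk₀ k hk⟩
  set p : ℕ := sSup {k : ℕ | R ≤ M.lam k} with hpdef
  have hp : R ≤ M.lam p := Nat.sSup_mem hSpne hSpbdd
  have hpP : P ≤ p := le_csSup hSpbdd hRb.le
  have hp2 : M.lam (p+1) < R := by
    by_contra hge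
    push_neg at hge
    have : p + 1 ≤ p := le_csSup hSpbdd hge
    omega
  have hpq : p < q := by
    have h := lt_of_le_of_lt hq (lt_of_lt_of_le hrRlt hp)
    exact (M.lam_anti.lt_iff_gt).mp h
  have hq1 : 1 ≤ q := by omega
  have hqQ : Q₁ ≤ q ∧ K ≤ q ∧ Q₂ ≤ q ∧ Q₄ ≤ q := by
    constructor
    · omega
    constructor
    · omega
    constructor
    · omega
    · omega
  -- the covering estimate
  have hcover := M.coverNum_le (le_of_lt hpq) hq hR0.le hp
  have hcast : (coverNum ↥M.E r R : ℝ) ≤ 4 * ∏ i ∈ Finset.Icc (p+1) q, (M.n i : ℝ) := by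
    calc (coverNum ↥M.E r R : ℝ) ≤ ((4 * ∏ i ∈ Finset.Icc (p+1) q, M.n i : ℕ) : ℝ) := by
          exact_mod_cast hcover
      _ = 4 * ∏ i ∈ Finset.Icc (p+1) q, (M.n i : ℝ) := by push_cast; ring
  -- logarithmic estimates
  have hgq := M.gam_pos hq1
  set W : ℝ := Real.log R - Real.log r with hWdef
  have hlogRr : Real.log (R / r) = W := Real.log_div (ne_of_gt hR0) (ne_of_gt hr0)
  have hlogR1 : Real.log R ≤ -M.gam p + Real.log (M.B - M.A) := by
    rw [← M.log_lam p]
    exact Real.log_le_log hR0 hp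
  have hlogR2 : (1 - δ) * Real.log r ≤ Real.log R := by
    have := Real.log_le_log (Real.rpow_pos_of_pos hr0 _) hrR
    rwa [Real.log_rpow hr0] at this
  have hlogr1 : -M.gam q + Real.log (M.B - M.A) ≤ Real.log r := by
    rw [← M.log_lam q]
    exact Real.log_le_log (M.lam_pos q) hq
  have hlogr2 : Real.log r < -M.gam (q-1) + Real.log (M.B - M.A) := by
    rw [← M.log_lam (q-1)]
    exact Real.log_lt_log hr0 (hqmin (q-1) (by omega))
  have hlogR3 : -M.gam (p+1) + Real.log (M.B - M.A) < Real.log R := by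
    rw [← M.log_lam (p+1)]
    exact Real.log_lt_log (M.lam_pos (p+1)) hp2
  -- (b) : γ p ≤ (1-δ) γ q + δ log L
  have hb1 : M.gam p ≤ (1 - δ) * M.gam q + δ * Real.log (M.B - M.A) := by
    have hmul : (1 - δ) * (-M.gam q + Real.log (M.B - M.A)) ≤ (1 - δ) * Real.log r :=
      mul_le_mul_of_nonneg_left hlogr1 (by linarith)
    have e1 : M.gam p ≤ Real.log (M.B - M.A)
        - (1 - δ) * (-M.gam q + Real.log (M.B - M.A)) := by linarith
    calc M.gam p ≤ Real.log (M.B - M.A)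
        - (1 - δ) * (-M.gam q + Real.log (M.B - M.A)) := e1
      _ = (1 - δ) * M.gam q + δ * Real.log (M.B - M.A) := by ring
  have hb2 : M.gam p < (1 - δ') * M.gam q := by
    have hQ2 := hQ₂ q hqQ.2.2.1
    rw [div_le_iff₀ (by linarith : (0:ℝ) < δ - δ')] at hQ2
    have hll : δ * Real.log (M.B - M.A) ≤ δ * logL :=
      mul_le_mul_of_nonneg_left (le_abs_self _) hδ0.le
    have e3 : M.gam q * (δ - δ') = δ * M.gam q - δ' * M.gam q := by ring
    have e4 : (1 - δ) * M.gam q = M.gam q - δ * M.gam q := by ring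
    have e5 : (1 - δ') * M.gam q = M.gam q - δ' * M.gam q := by ring
    linarith
  -- membership p+1 ≤ lIdx δ' q
  have hpl : p + 1 ≤ lIdx M.c δ' q := by
    apply M.le_lIdx hq1 (by omega) (by omega : p + 1 ≤ q) ?_
    have hps : (p + 1) - 1 = p := by omega
    rw [hps, lt_div_iff₀ hgq]
    linarith
  -- spq bound
  have hspq : spq M.n M.c (p+1) q < α₀ :=
    lt_of_le_of_lt (M.le_Mfun (by omega) hpl) (hQ₁ q hqQ.1)
  -- (c) : G ≤ W + 2 ε γ q
  have hc2 : M.gam q - M.gam (q-1) ≤ ε * M.gam q := by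
    have := hK q hqQ.2.1
    exact this
  have hc3 : M.gam (p+1) - M.gam p ≤ ε * M.gam q := by
    have h := hK (p+1) (by omega)
    have hps : (p+1) - 1 = p := by omega
    rw [hps] at h
    have h2 := mul_le_mul_of_nonneg_left (M.gam_mono (show p+1 ≤ q by omega)) hε0.le
    linarith
  have hc1 : M.gam (q-1) - M.gam (p+1) ≤ W := by
    rw [hWdef]
    linarith [hlogR3, hlogr2]
  have hG : M.gam q - M.gam p ≤ W + 2 * ε * M.gam q := by linarith
  -- (d) : W ≥ δ γ q / 3
  have hW0 : 0 < W := by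
    rw [hWdef]
    have := Real.log_lt_log hr0 hrRlt
    linarith
  have hd : δ * M.gam q / 3 ≤ W := by
    have h1' : δ * (-Real.log r) ≤ W := by
      have e : Real.log r - δ * Real.log r ≤ Real.log R := by
        calc Real.log r - δ * Real.log r = (1-δ) * Real.log r := by ring
          _ ≤ Real.log R := hlogR2
      have e2 : δ * (-Real.log r) = -(δ * Real.log r) := by ring
      rw [hWdef, e2]
      linarith
    have h2' : M.gam (q-1) - Real.log (M.B - M.A) ≤ -Real.log r := by linarith [hlogr2]
    have h3' : (1 - ε) * M.gam q ≤ M.gam (q-1) := by linarith [hc2]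
    have h4' : 6 * logL + 1 ≤ M.gam q := hQ₄ q hqQ.2.2.2
    have h5' : Real.log (M.B - M.A) ≤ logL := le_abs_self _
    have h6' : M.gam q / 2 - logL ≤ (1 - ε) * M.gam q - logL := by
      nlinarith [mul_nonneg (by linarith : (0:ℝ) ≤ 1/2 - ε) hgq.le]
    have h7' : M.gam q / 3 ≤ M.gam q / 2 - logL := by linarith
    have : δ * (M.gam q / 3) ≤ δ * (-Real.log r) := by
      apply mul_le_mul_of_nonneg_left _ hδ0.le
      linarith
    linarith [this, h1']
  -- combine
  have hγq3W : M.gam q ≤ 3 * W / δ := by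
    rw [le_div_iff₀ hδ0]
    linarith
  have hlogNbd : M.logN (p+1) q ≤ α * W := by
    have hps : (p+1) - 1 = p := by omega
    have heq := M.logN_eq_spq (show 1 ≤ p+1 by omega) (show p+1 ≤ q by omega)
    rw [hps] at heq
    have hGpos : 0 < M.gam q - M.gam p := by
      have := M.gam_window_pos (show 1 ≤ p+1 by omega) (show p+1 ≤ q by omega)
      rwa [hps] at this
    have hspq0 : 0 ≤ spq M.n M.c (p+1) q := M.spq_nonneg (by omega) (by omega)
    calc M.logN (p+1) q = spq M.n M.c (p+1) q * (M.gam q - M.gam p) := heq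
      _ ≤ α₀ * (M.gam q - M.gam p) := mul_le_mul_of_nonneg_right hspq.le hGpos.le
      _ ≤ α₀ * (W + 2 * ε * M.gam q) := mul_le_mul_of_nonneg_left hG hα₀0
      _ ≤ α₀ * W + 2 * ε * α₀ * (3 * W / δ) := by
          have hm := mul_le_mul_of_nonneg_left hγq3W
            (by positivity : (0:ℝ) ≤ 2 * ε * α₀)
          nlinarith [hm]
      _ = (α₀ + 6 * ε * α₀ / δ) * W := by field_simp; ring
      _ ≤ α * W := by
          apply mul_le_mul_of_nonneg_right _ hW0.le
          have h6 : 6 * ε * α₀ ≤ δ * (α - α₀) := by nlinarith [hεkey, hε0.le]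
          have h7 : 6 * ε * α₀ / δ ≤ α - α₀ := by
            rw [div_le_iff₀ hδ0]
            linarith
          linarith
  have hprod : (∏ i ∈ Finset.Icc (p+1) q, (M.n i : ℝ)) ≤ (R/r) ^ α := by
    have hppos : (0:ℝ) < ∏ i ∈ Finset.Icc (p+1) q, (M.n i : ℝ) :=
      lt_of_lt_of_le one_pos (M.prod_n_ge_one (by omega))
    have hRr : (0:ℝ) < R / r := div_pos hR0 hr0
    rw [← Real.exp_log hppos, Real.rpow_def_of_pos hRr, hlogRr]
    apply Real.exp_le_exp.mpr
    calc Real.log (∏ i ∈ Finset.Icc (p+1) q, (M.n i : ℝ)) = M.logN (p+1) q := rfl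
      _ ≤ α * W := hlogNbd
      _ = W * α := by ring
  calc (coverNum ↥M.E r R : ℝ) ≤ 4 * ∏ i ∈ Finset.Icc (p+1) q, (M.n i : ℝ) := hcast
    _ ≤ 4 * (R/r) ^ α := by linarith [hprod]


/-- Main lower estimate: `SSfun δ'` is at most any valid quasi-Assouad exponent at
parameter `δ'/2`. -/
lemma SSfun_le_exponent (hlim : Filter.Tendsto
      (fun k : ℕ => Real.log (M.c k) / Real.log (∏ i ∈ Finset.Icc 1 k, M.c i))
      Filter.atTop (𝓝 0))
    {δ' : ℝ} (h0 : 0 < δ') (h1 : δ' < 1) {α b C : ℝ}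
    (hα0 : 0 ≤ α) (hb : 0 < b) (hC : 0 < C)
    (hprop : ∀ r R : ℝ, 0 < r → r < r ^ (1 - δ'/2) → r ^ (1 - δ'/2) ≤ R → R < b →
        (coverNum ↥M.E r R : ℝ) ≤ C * (R / r) ^ α) :
    SSfun M.n M.c δ' ≤ α := by
  apply le_of_forall_pos_le_add
  intro ε hε
  -- thresholds
  obtain ⟨P₀, hP₀⟩ : ∃ k, M.lam k < b := by
    have := M.lam_tendsto.eventually_lt_const hb
    rw [Filter.eventually_atTop] at this
    obtain ⟨k, hk⟩ := this
    exact ⟨k, hk k le_rfl⟩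
  set P : ℕ := P₀ + 1 with hPdef
  set logL : ℝ := |Real.log (M.B - M.A)| with hlogLdef
  have hlogL0 : 0 ≤ logL := abs_nonneg _
  set C₂ : ℝ := M.logN 1 P + |Real.log (4*C)| with hC₂def
  have hC₂0 : 0 ≤ C₂ := add_nonneg (M.logN_nonneg le_rfl) (abs_nonneg _)
  obtain ⟨QA, hQA⟩ := M.exists_gam_large ((M.gam (P-1) + (δ'/2) * logL)/(δ'/2))
  obtain ⟨QB, hQB⟩ := M.exists_gam_large (C₂/(δ'*ε))
  obtain ⟨QC, hQC⟩ : ∃ Q, ∀ q ≥ Q, M.lam q < 1 := by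
    have := M.lam_tendsto.eventually_lt_const one_pos
    rw [Filter.eventually_atTop] at this
    obtain ⟨k, hk⟩ := this
    exact ⟨k, hk⟩
  -- limsup bound via eventual bound
  apply Filter.limsup_le_of_le (M.Mfun_cobdd δ')
  rw [Filter.eventually_atTop]
  refine ⟨max (max P QA) (max QB (QC + 1)) + 1, fun q hq => ?_⟩
  have hq1 : 1 ≤ q := by omega
  have hqP : P ≤ q := by omega
  have hqA : QA ≤ q := by omega
  have hqB : QB ≤ q := by omega
  have hqC : QC ≤ q := by omega
  have hgq := M.gam_pos hq1
  apply M.Mfun_le (by linarith)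
  intro p hp hpl
  have hpq : p ≤ q := le_trans hpl (M.lIdx_le δ' q)
  have hcond := M.lIdx_cond h1 hq1 hp hpl
  rw [lt_div_iff₀ hgq] at hcond
  -- hcond : δ' * γ q < γ q - γ (p-1)
  set p' : ℕ := max p P with hp'def
  have hp'1 : 1 ≤ p' := le_trans hp (le_max_left _ _)
  have hp'q : p' ≤ q := max_le hpq hqP
  have hp'P₀ : P₀ ≤ p' - 1 := by omega
  have hgp' : M.gam (p'-1) ≤ M.gam (p-1) + M.gam (P-1) := by
    rcases max_choice p P with h | h
    · rw [hp'def, h]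
      linarith [M.gam_nonneg (P-1)]
    · rw [hp'def, h]
      linarith [M.gam_nonneg (p-1)]
  set r : ℝ := M.lam q with hrdef
  set R : ℝ := M.lam (p'-1) with hRdef
  have hr0 : 0 < r := M.lam_pos q
  have hR0 : 0 < R := M.lam_pos (p'-1)
  have hr1 : r < 1 := hQC q (by omega)
  have hδ'' : 0 < δ'/2 := by linarith
  have hrr : r < r ^ (1 - δ'/2) := by
    have := Real.rpow_lt_rpow_of_exponent_gt hr0 hr1 (show 1 - δ'/2 < 1 by linarith)
    rwa [Real.rpow_one] at this
  have hgam_cond : M.gam (p'-1) ≤ (1 - δ'/2) * M.gam q + (δ'/2) * Real.log (M.B - M.A) := by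
    have hA := hQA q hqA
    rw [div_le_iff₀ hδ''] at hA
    have h2 : M.gam (p-1) ≤ (1-δ') * M.gam q := by nlinarith [hcond]
    have h3 : -((δ'/2) * logL) ≤ (δ'/2) * Real.log (M.B - M.A) := by
      have := neg_abs_le (Real.log (M.B - M.A))
      nlinarith [hδ''.le]
    nlinarith [hgp', hA, h2, h3]
  have hrR : r ^ (1 - δ'/2) ≤ R := by
    have hlogr : Real.log r = -M.gam q + Real.log (M.B - M.A) := M.log_lam q
    have hlogR : Real.log R = -M.gam (p'-1) + Real.log (M.B - M.A) := M.log_lam (p'-1)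
    have hle : (1 - δ'/2) * Real.log r ≤ Real.log R := by
      rw [hlogr, hlogR]
      have : (1 - δ'/2) * (-M.gam q + Real.log (M.B - M.A))
          = -(1 - δ'/2) * M.gam q + Real.log (M.B - M.A)
            - (δ'/2) * Real.log (M.B - M.A) := by ring
      rw [this]
      linarith [hgam_cond]
    calc r ^ (1 - δ'/2) = Real.exp ((Real.log r) * (1 - δ'/2)) := Real.rpow_def_of_pos hr0 _
      _ ≤ Real.exp (Real.log R) := by
          apply Real.exp_le_exp.mpr
          calc Real.log r * (1 - δ'/2) = (1 - δ'/2) * Real.log r := by ring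
            _ ≤ Real.log R := hle
      _ = R := Real.exp_log hR0
  have hRb : R < b := lt_of_le_of_lt (M.lam_anti.antitone hp'P₀) hP₀
  have hcn := hprop r R hr0 hrr hrR hRb
  have hlow := M.le_coverNum hp'1 hp'q (le_refl R)
  have hlow' : (∏ i ∈ Finset.Icc p' q, (M.n i : ℝ)) ≤ 4 * (coverNum ↥M.E r R : ℝ) := by
    have := hlow
    calc (∏ i ∈ Finset.Icc p' q, (M.n i : ℝ))
        = ((∏ i ∈ Finset.Icc p' q, M.n i : ℕ) : ℝ) := by push_cast; ring
      _ ≤ ((4 * coverNum ↥M.E (M.lam q) R : ℕ) : ℝ) := by exact_mod_cast hlow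
      _ = 4 * (coverNum ↥M.E r R : ℝ) := by push_cast; rw [hrdef]
  have hprod_le : (∏ i ∈ Finset.Icc p' q, (M.n i : ℝ)) ≤ 4 * C * (R/r) ^ α := by
    calc (∏ i ∈ Finset.Icc p' q, (M.n i : ℝ)) ≤ 4 * (coverNum ↥M.E r R : ℝ) := hlow'
      _ ≤ 4 * (C * (R/r) ^ α) := by
          have := hcn
          linarith
      _ = 4 * C * (R/r) ^ α := by ring
  -- take logarithms
  have hRr0 : 0 < R / r := div_pos hR0 hr0
  have hlogRr : Real.log (R/r) = M.gam q - M.gam (p'-1) := by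
    rw [Real.log_div (ne_of_gt hR0) (ne_of_gt hr0), hrdef, hRdef, M.log_lam q,
      M.log_lam (p'-1)]
    ring
  have hlogN' : M.logN p' q ≤ Real.log (4*C) + α * (M.gam q - M.gam (p'-1)) := by
    have hppos : (0:ℝ) < ∏ i ∈ Finset.Icc p' q, (M.n i : ℝ) :=
      lt_of_lt_of_le one_pos (M.prod_n_ge_one hp'1)
    have h4C : (0:ℝ) < 4 * C := by linarith
    have := Real.log_le_log hppos hprod_le
    rwa [Real.log_mul (ne_of_gt h4C) (ne_of_gt (Real.rpow_pos_of_pos hRr0 α)),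
      Real.log_rpow hRr0, hlogRr] at this
  -- split the product over `Icc p q`
  have hsplit : M.logN p q ≤ M.logN 1 P + M.logN p' q := by
    have hsub : Finset.Icc p (p'-1) ⊆ Finset.Icc 1 P := by
      intro i hi
      rw [Finset.mem_Icc] at *
      rcases max_choice p P with h | h <;> omega
    have hmono : (∏ i ∈ Finset.Icc p (p'-1), (M.n i : ℝ)) ≤ ∏ i ∈ Finset.Icc 1 P, (M.n i : ℝ) := by
      rw [← Finset.prod_sdiff hsub]
      have hone : (1:ℝ) ≤ ∏ i ∈ Finset.Icc 1 P \ Finset.Icc p (p'-1), (M.n i : ℝ) := by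
        have h := Finset.prod_le_prod (f := fun _ => (1:ℝ)) (g := fun i => (M.n i : ℝ))
          (s := Finset.Icc 1 P \ Finset.Icc p (p'-1)) (by intro i _; norm_num)
          (by
            intro i hi
            have hi1 := (Finset.mem_Icc.mp (Finset.mem_sdiff.mp hi).1).1
            have h2 := M.hn i hi1
            show (1:ℝ) ≤ (M.n i : ℝ)
            have h3 : (2:ℝ) ≤ (M.n i : ℝ) := by exact_mod_cast h2
            linarith)
        simpa using h
      have hpos : (0:ℝ) < ∏ i ∈ Finset.Icc p (p'-1), (M.n i : ℝ) :=
        lt_of_lt_of_le one_pos (M.prod_n_ge_one hp)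
      nlinarith
    have hprodsplit : (∏ i ∈ Finset.Icc p (p'-1), (M.n i : ℝ)) * (∏ i ∈ Finset.Icc p' q, (M.n i : ℝ))
        = ∏ i ∈ Finset.Icc p q, (M.n i : ℝ) := by
      have h1' : Finset.Icc p (p'-1) = Finset.Ioc (p-1) (p'-1) := by
        rw [← Finset.Icc_add_one_left_eq_Ioc]
        congr 1
        omega
      have h2' : Finset.Icc p' q = Finset.Ioc (p'-1) q := by
        rw [← Finset.Icc_add_one_left_eq_Ioc]
        congr 1
        omega
      have h3' : Finset.Icc p q = Finset.Ioc (p-1) q := by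
        rw [← Finset.Icc_add_one_left_eq_Ioc]
        congr 1
        omega
      rw [h1', h2', h3']
      exact Finset.prod_Ioc_consecutive _ (by omega) (by omega)
    have hpos1 : (0:ℝ) < ∏ i ∈ Finset.Icc p (p'-1), (M.n i : ℝ) :=
      lt_of_lt_of_le one_pos (M.prod_n_ge_one hp)
    have hpos2 : (0:ℝ) < ∏ i ∈ Finset.Icc p' q, (M.n i : ℝ) :=
      lt_of_lt_of_le one_pos (M.prod_n_ge_one hp'1)
    unfold logN
    rw [← hprodsplit, Real.log_mul (ne_of_gt hpos1) (ne_of_gt hpos2)]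
    have hl := Real.log_le_log hpos1 hmono
    linarith
  -- assemble
  have hD : δ' * M.gam q < M.gam q - M.gam (p-1) := hcond
  have hDpos : 0 < M.gam q - M.gam (p-1) := by nlinarith [hgq]
  have hγmono : M.gam (p-1) ≤ M.gam (p'-1) := M.gam_mono (by omega)
  have hfinal : M.logN p q ≤ C₂ + α * (M.gam q - M.gam (p-1)) := by
    have h1' : Real.log (4*C) ≤ |Real.log (4*C)| := le_abs_self _
    have h2' : α * (M.gam q - M.gam (p'-1)) ≤ α * (M.gam q - M.gam (p-1)) :=
      mul_le_mul_of_nonneg_left (by linarith) hα0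
    rw [hC₂def]
    linarith [hsplit, hlogN']
  have hspq : spq M.n M.c p q ≤ α + ε := by
    rw [M.spq_eq hp (by omega), div_le_iff₀ hDpos]
    have hC₂D : C₂ ≤ ε * (δ' * M.gam q) := by
      have hB := hQB q hqB
      rw [div_le_iff₀ (by positivity : (0:ℝ) < δ' * ε)] at hB
      nlinarith
    have : ε * (δ' * M.gam q) ≤ ε * (M.gam q - M.gam (p-1)) :=
      mul_le_mul_of_nonneg_left hD.le hε.le
    nlinarith [hfinal]
  exact hspq


lemma hFun_le_SSfun (hlim : Filter.Tendsto
      (fun k : ℕ => Real.log (M.c k) / Real.log (∏ i ∈ Finset.Icc 1 k, M.c i))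
      Filter.atTop (𝓝 0))
    {δ' δ : ℝ} (h0 : 0 < δ') (h1 : δ' < δ) (h2 : δ < 1) :
    hFun ↥M.E δ ≤ SSfun M.n M.c δ' := by
  by_contra h
  push_neg at h
  set α : ℝ := (SSfun M.n M.c δ' + hFun ↥M.E δ)/2 with hαdef
  have hσα : SSfun M.n M.c δ' < α := by rw [hαdef]; linarith
  have hmem := M.mem_hFunSet hlim h0 h1 h2 hσα
  have hle : hFun ↥M.E δ ≤ α := by
    rw [hFun]
    exact csInf_le ⟨0, fun β hβ => hβ.1⟩ hmem
  rw [hαdef] at hle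
  linarith

lemma SSfun_le_hFun (hlim : Filter.Tendsto
      (fun k : ℕ => Real.log (M.c k) / Real.log (∏ i ∈ Finset.Icc 1 k, M.c i))
      Filter.atTop (𝓝 0))
    {δ' : ℝ} (h0 : 0 < δ') (h1 : δ' < 1) :
    SSfun M.n M.c δ' ≤ hFun ↥M.E (δ'/2) := by
  rw [hFun]
  apply le_csInf
  · exact ⟨SSfun M.n M.c (δ'/4) + 1, M.mem_hFunSet hlim (δ' := δ'/4) (δ := δ'/2)
      (α := SSfun M.n M.c (δ'/4) + 1) (by linarith) (by linarith) (by linarith) (by linarith)⟩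
  · rintro β ⟨hβ0, b, C, hb, hC, hprop⟩
    exact M.SSfun_le_exponent hlim h0 h1 hβ0 hb hC hprop

lemma SSfun_anti {δ₁ δ₂ : ℝ} (hδ : δ₁ ≤ δ₂) :
    SSfun M.n M.c δ₂ ≤ SSfun M.n M.c δ₁ := by
  apply Filter.limsup_le_limsup _ (M.Mfun_cobdd δ₂) (M.Mfun_bddUnder δ₁)
  apply Filter.Eventually.of_forall
  intro q
  have hlIdx : lIdx M.c δ₂ q ≤ lIdx M.c δ₁ q := by
    apply csSup_le'
    rintro p ⟨hp1, hp2, hp3⟩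
    exact le_csSup (M.Lset_bdd δ₁ q) ⟨hp1, hp2, lt_of_le_of_lt hδ hp3⟩
  apply Real.sSup_le _ (M.Mfun_nonneg δ₁ q)
  rintro s ⟨p, hp1, hp2, rfl⟩
  exact M.le_Mfun hp1 (le_trans hp2 hlIdx)

lemma SS_image_bdd : BddAbove (SSfun M.n M.c '' Set.Ioo 0 1) := by
  refine ⟨1, ?_⟩
  rintro x ⟨δ, _, rfl⟩
  exact M.SSfun_le_one δ

lemma hFun_image_bdd (hlim : Filter.Tendsto
      (fun k : ℕ => Real.log (M.c k) / Real.log (∏ i ∈ Finset.Icc 1 k, M.c i))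
      Filter.atTop (𝓝 0)) : BddAbove (hFun ↥M.E '' Set.Ioo 0 1) := by
  refine ⟨1, ?_⟩
  rintro x ⟨δ, hδ, rfl⟩
  obtain ⟨hδ0, hδ1⟩ := hδ
  calc hFun ↥M.E δ ≤ SSfun M.n M.c (δ/2) := M.hFun_le_SSfun hlim (by linarith) (by linarith) hδ1
    _ ≤ 1 := M.SSfun_le_one _

lemma dimqA_eq (hlim : Filter.Tendsto
      (fun k : ℕ => Real.log (M.c k) / Real.log (∏ i ∈ Finset.Icc 1 k, M.c i))
      Filter.atTop (𝓝 0)) :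
    dimqA ↥M.E = sSup (SSfun M.n M.c '' Set.Ioo 0 1) := by
  apply le_antisymm
  · rw [dimqA]
    apply csSup_le (Set.Nonempty.image _ ⟨1/2, by norm_num⟩)
    rintro x ⟨δ, ⟨hδ0, hδ1⟩, rfl⟩
    calc hFun ↥M.E δ ≤ SSfun M.n M.c (δ/2) :=
          M.hFun_le_SSfun hlim (by linarith) (by linarith) hδ1
      _ ≤ sSup (SSfun M.n M.c '' Set.Ioo 0 1) :=
          le_csSup M.SS_image_bdd ⟨δ/2, ⟨by linarith, by linarith⟩, rfl⟩
  · apply csSup_le (Set.Nonempty.image _ ⟨1/2, by norm_num⟩)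
    rintro x ⟨δ', ⟨hδ0, hδ1⟩, rfl⟩
    calc SSfun M.n M.c δ' ≤ hFun ↥M.E (δ'/2) := M.SSfun_le_hFun hlim hδ0 hδ1
      _ ≤ dimqA ↥M.E := by
          rw [dimqA]
          exact le_csSup (M.hFun_image_bdd hlim) ⟨δ'/2, ⟨by linarith, by linarith⟩, rfl⟩

lemma main (hlim : Filter.Tendsto
      (fun k : ℕ => Real.log (M.c k) / Real.log (∏ i ∈ Finset.Icc 1 k, M.c i))
      Filter.atTop (𝓝 0)) :
    Filter.Tendsto (fun δ : ℝ => SSfun M.n M.c δ) (𝓝[>] (0:ℝ)) (𝓝 (dimqA ↥M.E)) := by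
  rw [M.dimqA_eq hlim]
  set T : ℝ := sSup (SSfun M.n M.c '' Set.Ioo 0 1) with hTdef
  rw [Metric.tendsto_nhdsWithin_nhds]
  intro ε hε
  -- find δ₀ with SSfun δ₀ > T - ε
  have hne : (SSfun M.n M.c '' Set.Ioo 0 1).Nonempty := ⟨_, ⟨1/2, by norm_num, rfl⟩⟩
  obtain ⟨y, ⟨δ₀, hδ₀, rfl⟩, hy⟩ := exists_lt_of_lt_csSup hne
    (show T - ε < T by linarith)
  refine ⟨δ₀, hδ₀.1, ?_⟩
  intro δ hδmem hδdist
  rw [Set.mem_Ioi] at hδmem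
  rw [Real.dist_eq, sub_zero, abs_of_pos hδmem] at hδdist
  have h1 : SSfun M.n M.c δ₀ ≤ SSfun M.n M.c δ := M.SSfun_anti hδdist.le
  have h2 : SSfun M.n M.c δ ≤ T :=
    le_csSup M.SS_image_bdd ⟨δ, ⟨hδmem, lt_trans hδdist hδ₀.2⟩, rfl⟩
  rw [Real.dist_eq, abs_lt]
  constructor <;> linarith

end MD



/-- If `n_k ≥ 2`, `c_k ∈ (0, 1/n_k]` and `log c_k / log (c_1 ⋯ c_k) → 0`, then for every
Moran set `E ∈ M(J, {n_k}, {c_k})`,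
`dim_qA E = lim_{δ→0} limsup_{q→∞} max_{1 ≤ p ≤ l_{q,δ}} log (n_p ⋯ n_q) / (- log (c_p ⋯ c_q))`. -/
theorem dimqA_moran (J : Set ℝ) (n : ℕ → ℕ) (c : ℕ → ℝ)
    (hn : ∀ k : ℕ, 1 ≤ k → 2 ≤ n k)
    (hc : ∀ k : ℕ, 1 ≤ k → 0 < c k ∧ c k ≤ 1 / (n k : ℝ))
    (hlim : Filter.Tendsto
      (fun k : ℕ => Real.log (c k) / Real.log (∏ i ∈ Finset.Icc 1 k, c i))
      Filter.atTop (𝓝 0))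
    (E : Set ℝ) (hE : IsMoranSet J n c E) :
    Filter.Tendsto (fun δ : ℝ =>
        Filter.limsup (fun q : ℕ =>
          sSup {s : ℝ | ∃ p : ℕ, 1 ≤ p ∧ p ≤ lIdx c δ q ∧ s = spq n c p q})
          Filter.atTop)
      (𝓝[>] (0 : ℝ)) (𝓝 (dimqA E)) := by
  obtain ⟨A, B, hAB, hJ, a, b, ha0, hb0, hstep, hsep, hEq⟩ := hE
  set M : MD := ⟨n, c, A, B, a, b, E, hn, hc, hAB, ha0, hb0, hstep, hsep, hEq⟩ with hM
  exact M.main hlim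
end

section
/- Let {n_k}_{k≥1} be integers with n_k ≥ 2 and c_k ∈ (0, 1/n_k] satisfy lim_{k→∞} (log c_k)/(log(c_1⋯c_k)) = 0 and limsup_{k→∞} (log n_k)/(−log c_k) < 1. Then every Moran set E ∈ M(J, {n_k}, {c_k}) is quasi uniformly disconnected. -/
open Filter Topology Metric Set

/-- A set `E ⊆ ℝ` is quasi uniformly disconnected: there is `ψ : ℝ⁺ → ℝ⁺` with `ψ r < r`
and `log ψ(r) / log r → 1` as `r → 0⁺`, and `r* > 0`, such that for every `x ∈ E` and
`0 < r < r*` there is `E ∩ B(x, ψ r) ⊆ F ⊆ B(x, r)` with `dist(F, E \ F) ≥ ψ r`. -/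
def QuasiUniformlyDisconnectedSet (E : Set ℝ) : Prop :=
  ∃ ψ : ℝ → ℝ, (∀ r : ℝ, 0 < r → 0 < ψ r ∧ ψ r < r) ∧
    Filter.Tendsto (fun r => Real.log (ψ r) / Real.log r) (𝓝[>] (0 : ℝ)) (𝓝 1) ∧
    ∃ rstar : ℝ, 0 < rstar ∧ ∀ x ∈ E, ∀ r : ℝ, 0 < r → r < rstar →
      ∃ F : Set ℝ, F ⊆ E ∧ E ∩ Metric.closedBall x (ψ r) ⊆ F ∧
        F ⊆ Metric.closedBall x r ∧ ∀ y ∈ F, ∀ z ∈ E \ F, ψ r ≤ dist y z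

lemma adm_nil (n : ℕ → ℕ) : MoranAdmissible n [] := by
  intro t ht; simp at ht

lemma adm_append_elim {n : ℕ → ℕ} {w : List ℕ} {j : ℕ}
    (h : MoranAdmissible n (w ++ [j])) :
    MoranAdmissible n w ∧ 1 ≤ j ∧ j ≤ n (w.length + 1) := by
  constructor
  · intro t ht
    have := h t (by simp; omega)
    rwa [List.getD_append _ _ _ _ ht] at this
  · have := h w.length (by simp)
    have hg : (w ++ [j]).getD w.length 0 = j := by
      simp [List.getD, List.getElem?_append_right (le_refl w.length)]
    rwa [hg] at this

lemma adm_append_intro {n : ℕ → ℕ} {w : List ℕ} {j : ℕ}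
    (h : MoranAdmissible n w) (h1 : 1 ≤ j) (h2 : j ≤ n (w.length + 1)) :
    MoranAdmissible n (w ++ [j]) := by
  intro t ht
  simp at ht
  rcases Nat.lt_or_ge t w.length with h' | h'
  · rw [List.getD_append _ _ _ _ h']; exact h t h'
  · have ht' : t = w.length := by omega
    subst ht'
    have hg : (w ++ [j]).getD w.length 0 = j := by
      simp [List.getD, List.getElem?_append_right (le_refl w.length)]
    rw [hg]; exact ⟨h1, h2⟩

lemma adm_prefix {n : ℕ → ℕ} {w s : List ℕ} (h : MoranAdmissible n (w ++ s)) :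
    MoranAdmissible n w := by
  intro t ht
  have := h t (by simp; omega)
  rwa [List.getD_append _ _ _ _ ht] at this

lemma getD_take_eq (w : List ℕ) (k t : ℕ) (ht : t < k) :
    (w.take k).getD t 0 = w.getD t 0 := by
  rw [List.getD_eq_getElem?_getD, List.getD_eq_getElem?_getD, List.getElem?_take]
  simp [ht]

section MoranAux

variable {n : ℕ → ℕ} {c : ℕ → ℝ} {A B : ℝ} {a b : List ℕ → ℝ} {E : Set ℝ}
variable (hAB : A < B) (ha0 : a [] = A) (hb0 : b [] = B)
variable (hn : ∀ k : ℕ, 1 ≤ k → 2 ≤ n k)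
variable (hc : ∀ k : ℕ, 1 ≤ k → 0 < c k ∧ c k ≤ 1 / (n k : ℝ))
variable (hsub : ∀ w : List ℕ, MoranAdmissible n w → ∀ j : ℕ, 1 ≤ j → j ≤ n (w.length + 1) →
      a w ≤ a (w ++ [j]) ∧ a (w ++ [j]) < b (w ++ [j]) ∧ b (w ++ [j]) ≤ b w ∧
      b (w ++ [j]) - a (w ++ [j]) = c (w.length + 1) * (b w - a w))
variable (hdisj : ∀ w : List ℕ, MoranAdmissible n w → ∀ j j' : ℕ, 1 ≤ j → j ≤ n (w.length + 1) →
      1 ≤ j' → j' ≤ n (w.length + 1) → j ≠ j' →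
      interior (Set.Icc (a (w ++ [j])) (b (w ++ [j]))) ∩
        interior (Set.Icc (a (w ++ [j'])) (b (w ++ [j']))) = ∅)
variable (hlim : Filter.Tendsto
      (fun k : ℕ => Real.log (c k) / Real.log (∏ i ∈ Finset.Icc 1 k, c i))
      Filter.atTop (𝓝 0))
variable (hsup : Filter.limsup (fun k : ℕ => Real.log (n k : ℝ) / (-Real.log (c k)))
      Filter.atTop < 1)

/-- length of level-k intervals -/
noncomputable def Del (c : ℕ → ℝ) (A B : ℝ) (k : ℕ) : ℝ := (B - A) * ∏ i ∈ Finset.Icc 1 k, c i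

lemma Del_zero : Del c A B 0 = B - A := by simp [Del]

lemma Del_succ (k : ℕ) : Del c A B (k+1) = c (k+1) * Del c A B k := by
  unfold Del
  rw [Finset.prod_Icc_succ_top (by omega)]
  ring

include hAB hc in
lemma Del_pos (k : ℕ) : 0 < Del c A B k := by
  induction k with
  | zero => simp [Del_zero]; linarith
  | succ k ih => rw [Del_succ]; exact mul_pos (hc (k+1) (by omega)).1 ih

include hc in
lemma c_le_half (hn : ∀ k : ℕ, 1 ≤ k → 2 ≤ n k) (k : ℕ) (hk : 1 ≤ k) : c k ≤ 1/2 := by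
  have h1 := (hc k hk).2
  have h2 := hn k hk
  have : (1:ℝ)/(n k) ≤ 1/2 := by
    apply one_div_le_one_div_of_le (by norm_num)
    exact_mod_cast h2
  linarith

include hAB hc in
lemma Del_succ_le (hn : ∀ k : ℕ, 1 ≤ k → 2 ≤ n k) (k : ℕ) :
    Del c A B (k+1) ≤ Del c A B k / 2 := by
  rw [Del_succ]
  have hp := Del_pos hAB hc k
  have := c_le_half hc hn (k+1) (by omega)
  nlinarith

include hAB hc in
lemma Del_antitone (hn : ∀ k : ℕ, 1 ≤ k → 2 ≤ n k) : Antitone (Del c A B) := by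
  apply antitone_nat_of_succ_le
  intro k
  have := Del_succ_le hAB hc hn k
  have := Del_pos hAB hc k
  linarith

include hAB hc in
lemma Del_le_pow (hn : ∀ k : ℕ, 1 ≤ k → 2 ≤ n k) (k : ℕ) :
    Del c A B k ≤ (B - A) * (1/2)^k := by
  induction k with
  | zero => simp [Del_zero]
  | succ k ih =>
    have h1 := Del_succ_le hAB hc hn k
    have h2 := Del_pos hAB hc k
    have : (1:ℝ)/2 ^ (k+1) = ((1:ℝ)/2)^k / 2 := by rw [div_pow, one_pow, pow_succ, div_div]
    calc Del c A B (k+1) ≤ Del c A B k / 2 := h1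
      _ ≤ (B-A) * (1/2)^k / 2 := by linarith
      _ = (B-A) * (1/2)^(k+1) := by ring

include ha0 hb0 hsub in
lemma len_eq (w : List ℕ) (hw : MoranAdmissible n w) :
    b w - a w = Del c A B w.length := by
  induction w using List.reverseRecOn with
  | nil => simp [ha0, hb0, Del_zero]
  | append_singleton w j ih =>
    obtain ⟨hw', hj1, hj2⟩ := adm_append_elim hw
    have h := hsub w hw' j hj1 hj2
    rw [h.2.2.2, ih hw']
    simp [Del_succ]

include hAB ha0 hb0 hsub hc in
lemma a_lt_b (w : List ℕ) (hw : MoranAdmissible n w) : a w < b w := by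
  have := len_eq ha0 hb0 hsub w hw
  have := Del_pos hAB hc (w.length)
  linarith

include hsub in
lemma nested (w s : List ℕ) (hws : MoranAdmissible n (w ++ s)) :
    a w ≤ a (w ++ s) ∧ b (w ++ s) ≤ b w := by
  induction s using List.reverseRecOn with
  | nil => simp
  | append_singleton s j ih =>
    rw [← List.append_assoc] at hws ⊢
    obtain ⟨hw', hj1, hj2⟩ := adm_append_elim hws
    have h := hsub (w ++ s) hw' j hj1 hj2
    have := ih hw'
    constructor
    · calc a w ≤ a (w ++ s) := this.1
        _ ≤ a (w ++ s ++ [j]) := h.1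
    · calc b (w ++ s ++ [j]) ≤ b (w ++ s) := h.2.2.1
        _ ≤ b w := this.2


include hsub hdisj in
lemma interiors_disjoint : ∀ (K : ℕ) (w v : List ℕ), MoranAdmissible n w → MoranAdmissible n v →
    w.length = K → v.length = K → w ≠ v →
    interior (Set.Icc (a w) (b w)) ∩ interior (Set.Icc (a v) (b v)) = ∅ := by
  intro K
  induction K with
  | zero =>
    intro w v _ _ hw hv hne
    exact absurd (by rw [List.length_eq_zero_iff] at hw hv; rw [hw, hv]) hne
  | succ K ih =>
    intro w v hwadm hvadm hw hv hne
    have hwne : w ≠ [] := by intro h; simp [h] at hw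
    have hvne : v ≠ [] := by intro h; simp [h] at hv
    obtain ⟨w₀, j, rfl⟩ : ∃ w₀ j, w = w₀ ++ [j] :=
      ⟨w.dropLast, w.getLast hwne, (List.dropLast_append_getLast hwne).symm⟩
    obtain ⟨v₀, j', rfl⟩ : ∃ v₀ j', v = v₀ ++ [j'] :=
      ⟨v.dropLast, v.getLast hvne, (List.dropLast_append_getLast hvne).symm⟩
    simp only [List.length_append, List.length_singleton] at hw hv
    have hw0 : w₀.length = K := by omega
    have hv0 : v₀.length = K := by omega
    obtain ⟨hw0adm, hj1, hj2⟩ := adm_append_elim hwadm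
    obtain ⟨hv0adm, hj'1, hj'2⟩ := adm_append_elim hvadm
    by_cases h0 : w₀ = v₀
    · subst h0
      have hjj : j ≠ j' := by intro h; exact hne (by rw [h])
      exact hdisj w₀ hw0adm j j' hj1 hj2 hj'1 (by rwa [hw0, ← hv0] at hj'2) hjj
    · have hpar := ih w₀ v₀ hw0adm hv0adm hw0 hv0 h0
      have h1 := hsub w₀ hw0adm j hj1 hj2
      have h2 := hsub v₀ hv0adm j' hj'1 hj'2
      have s1 : Set.Icc (a (w₀ ++ [j])) (b (w₀ ++ [j])) ⊆ Set.Icc (a w₀) (b w₀) :=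
        Set.Icc_subset_Icc h1.1 h1.2.2.1
      have s2 : Set.Icc (a (v₀ ++ [j'])) (b (v₀ ++ [j'])) ⊆ Set.Icc (a v₀) (b v₀) :=
        Set.Icc_subset_Icc h2.1 h2.2.2.1
      apply Set.eq_empty_of_subset_empty
      calc _ ⊆ interior (Set.Icc (a w₀) (b w₀)) ∩ interior (Set.Icc (a v₀) (b v₀)) :=
            Set.inter_subset_inter (interior_mono s1) (interior_mono s2)
        _ = ∅ := hpar

include hAB ha0 hb0 hc hsub hdisj in
lemma endpoints_sep (K : ℕ) (w v : List ℕ) (hwadm : MoranAdmissible n w)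
    (hvadm : MoranAdmissible n v) (hw : w.length = K) (hv : v.length = K) (hne : w ≠ v) :
    Del c A B K ≤ |a w - a v| := by
  have hd := interiors_disjoint hsub hdisj K w v hwadm hvadm hw hv hne
  have hlw : b w - a w = Del c A B K := by rw [← hw]; exact len_eq ha0 hb0 hsub w hwadm
  have hlv : b v - a v = Del c A B K := by rw [← hv]; exact len_eq ha0 hb0 hsub v hvadm
  have hpos := Del_pos hAB hc K
  rw [interior_Icc, interior_Icc] at hd
  by_contra hlt
  push_neg at hlt
  rw [abs_sub_lt_iff] at hlt
  set ξ := (max (a w) (a v) + min (b w) (b v)) / 2 with hξ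
  have hξw : ξ ∈ Set.Ioo (a w) (b w) := by
    constructor <;>
    · simp only [hξ, lt_min_iff, max_lt_iff, lt_div_iff₀, div_lt_iff₀] <;>
      cases' le_total (a w) (a v) with h h <;>
      cases' le_total (b w) (b v) with h' h' <;>
      simp [max_def, min_def, h, h'] <;> linarith
  have hξv : ξ ∈ Set.Ioo (a v) (b v) := by
    constructor <;>
    · simp only [hξ, lt_min_iff, max_lt_iff, lt_div_iff₀, div_lt_iff₀] <;>
      cases' le_total (a w) (a v) with h h <;>
      cases' le_total (b w) (b v) with h' h' <;>
      simp [max_def, min_def, h, h'] <;> linarith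
  exact absurd (Set.mem_inter hξw hξv) (by rw [hd]; simp)


-- the product of the c's
noncomputable def PP (c : ℕ → ℝ) (k : ℕ) : ℝ := ∏ i ∈ Finset.Icc 1 k, c i

lemma PP_pos (hc : ∀ k : ℕ, 1 ≤ k → 0 < c k ∧ c k ≤ 1 / (n k : ℝ)) (k : ℕ) : 0 < PP c k :=
  Finset.prod_pos (fun i hi => (hc i (Finset.mem_Icc.mp hi).1).1)

include hAB hc in
lemma logDel_eq (k : ℕ) : Real.log (Del c A B k) = Real.log (B - A) + Real.log (PP c k) := by
  show Real.log ((B - A) * PP c k) = _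
  rw [Real.log_mul (by linarith) (ne_of_gt (PP_pos hc k))]

include hc hn in
lemma logPP_le (k : ℕ) : Real.log (PP c k) ≤ -(k : ℝ) * Real.log 2 := by
  have hle : PP c k ≤ (1/2)^k := by
    unfold PP
    calc ∏ i ∈ Finset.Icc 1 k, c i ≤ ∏ i ∈ Finset.Icc 1 k, (1/2 : ℝ) := by
          apply Finset.prod_le_prod
          · intro i hi; exact le_of_lt (hc i (Finset.mem_Icc.mp hi).1).1
          · intro i hi
            have h1 := (hc i (Finset.mem_Icc.mp hi).1).2
            have h2 := hn i (Finset.mem_Icc.mp hi).1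
            have : (1:ℝ)/(n i) ≤ 1/2 := by
              apply one_div_le_one_div_of_le (by norm_num); exact_mod_cast h2
            linarith
      _ = (1/2)^k := by rw [Finset.prod_const, Nat.card_Icc]; norm_num
  calc Real.log (PP c k) ≤ Real.log ((1/2)^k) :=
        Real.log_le_log (PP_pos hc k) hle
    _ = -(k:ℝ) * Real.log 2 := by
        rw [Real.log_pow]; rw [show (1:ℝ)/2 = 2⁻¹ by norm_num, Real.log_inv]; ring

include hc hn in
lemma logPP_atBot : Tendsto (fun k => Real.log (PP c k)) atTop atBot := by
  apply tendsto_atBot_mono (logPP_le hn hc)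
  have h2 : (0:ℝ) < Real.log 2 := Real.log_pos (by norm_num)
  have := (tendsto_natCast_atTop_atTop (R := ℝ)).atTop_mul_const h2
  rw [show (fun k : ℕ => -(k:ℝ) * Real.log 2) = (fun k : ℕ => -((k:ℝ) * Real.log 2)) by funext k; ring]
  exact tendsto_neg_atBot_iff.mpr this

noncomputable def LL (c : ℕ → ℝ) (A B : ℝ) (k : ℕ) : ℝ := Real.log (Del c A B k)

include hAB hn hc in
lemma LL_atBot : Tendsto (LL c A B) atTop atBot := by
  have h : ∀ k, LL c A B k = Real.log (B - A) + Real.log (PP c k) :=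
    fun k => logDel_eq hAB hc k
  rw [show LL c A B = fun k => Real.log (B - A) + Real.log (PP c k) from funext h]
  exact tendsto_atBot_add_const_left _ _ (logPP_atBot hn hc)

include hAB hn hc hlim in
lemma rho_tendsto : Tendsto (fun j => Real.log (c j) / LL c A B j) atTop (𝓝 0) := by
  have hPbot := logPP_atBot hn hc (c := c)
  have hLbot := LL_atBot hAB hn hc (c := c)
  -- L j / log P j → 1
  have h1 : Tendsto (fun j => LL c A B j / Real.log (PP c j)) atTop (𝓝 1) := by
    have hne : ∀ᶠ j in atTop, Real.log (PP c j) < -1 := hPbot.eventually (eventually_lt_atBot (-1))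
    have hneg : Tendsto (fun j => -Real.log (PP c j)) atTop atTop :=
      tendsto_neg_atTop_iff.mpr hPbot
    have h0 : Tendsto (fun j => Real.log (B - A) / Real.log (PP c j)) atTop (𝓝 0) := by
      have := Tendsto.div_atTop (tendsto_const_nhds (x := -Real.log (B - A))) hneg
      apply this.congr
      intro j
      rw [neg_div_neg_eq]
    have := h0.const_add (1:ℝ)
    rw [add_zero] at this
    apply this.congr'
    filter_upwards [hne] with j hj
    have hp : Real.log (PP c j) ≠ 0 := by linarith
    simp only [LL]
    rw [logDel_eq hAB hc j]
    field_simp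
    ring
  -- main
  have hmain : Tendsto (fun j => (Real.log (c j) / Real.log (PP c j)) / (LL c A B j / Real.log (PP c j))) atTop (𝓝 0) := by
    have := hlim.div h1 one_ne_zero
    rw [zero_div] at this
    exact this
  apply hmain.congr'
  filter_upwards [hPbot.eventually (eventually_lt_atBot (-1)),
    hLbot.eventually (eventually_lt_atBot (-1))] with j hj hLj
  have hp : Real.log (PP c j) ≠ 0 := by linarith
  have hl : LL c A B j ≠ 0 := by linarith
  field_simp

include hAB hn hc hlim in
lemma ratio_tendsto : Tendsto (fun j => LL c A B (j+1) / LL c A B j) atTop (𝓝 1) := by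
  have hrho := rho_tendsto hAB hn hc hlim
  have hrho1 : Tendsto (fun j => Real.log (c (j+1)) / LL c A B (j+1)) atTop (𝓝 0) :=
    hrho.comp (tendsto_add_atTop_nat 1)
  have hLbot := LL_atBot hAB hn hc (c := c)
  have h1 : Tendsto (fun j => (1 - Real.log (c (j+1)) / LL c A B (j+1))⁻¹) atTop (𝓝 1) := by
    have h2 : Tendsto (fun j => (1:ℝ) - Real.log (c (j+1)) / LL c A B (j+1)) atTop (𝓝 (1 - 0)) :=
      Tendsto.sub tendsto_const_nhds hrho1
    rw [sub_zero] at h2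
    have h3 := h2.inv₀ one_ne_zero
    simpa using h3
  apply h1.congr'
  have hev1 : ∀ᶠ j in atTop, LL c A B (j+1) < -1 :=
    (hLbot.comp (tendsto_add_atTop_nat 1)).eventually (eventually_lt_atBot (-1))
  filter_upwards [hev1, hrho1.eventually (eventually_le_nhds (by norm_num : (0:ℝ) < 1/2) : ∀ᶠ x in 𝓝 (0:ℝ), x ≤ 1/2)] with j hj hr
  have hLsucc : LL c A B j = LL c A B (j+1) - Real.log (c (j+1)) := by
    unfold LL
    rw [Del_succ, Real.log_mul (ne_of_gt (hc (j+1) (by omega)).1) (ne_of_gt (Del_pos hAB hc j))]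
    ring
  have hne : LL c A B (j+1) ≠ 0 := by linarith
  rw [hLsucc, inv_eq_one_div]
  rw [div_eq_div_iff]
  · field_simp
  · have : 1 - Real.log (c (j+1)) / LL c A B (j+1) ≥ 1/2 := by linarith
    linarith
  ·
    have hcpos := (hc (j+1) (by omega)).1
    have hchalf : c (j+1) ≤ 1/2 := by
      have h1 := (hc (j+1) (by omega)).2
      have h2 := hn (j+1) (by omega)
      have : (1:ℝ)/(n (j+1)) ≤ 1/2 := by
        apply one_div_le_one_div_of_le (by norm_num); exact_mod_cast h2
      linarith
    have : Real.log (c (j+1)) < 0 := Real.log_neg hcpos (by linarith)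
    intro h0
    -- LL(j+1) - log c = 0 with LL(j+1) < -1 and log c < 0 : then log c = LL(j+1) < -1 fine possible!
    -- need different argument: from hr : log c/(LL(j+1)) ≤ 1/2 ⇒ log c ≥ LL(j+1)/2 > LL(j+1)
    have hineq : Real.log (c (j+1)) ≥ LL c A B (j+1) * (1/2) := by
      have := (div_le_iff_of_neg (by linarith : LL c A B (j+1) < 0)).mp hr
      linarith
    nlinarith

lemma telescope (L : ℕ → ℝ) (j : ℕ) (hne : ∀ i : ℕ, L (j+i) ≠ 0) :
    ∀ m : ℕ, ∏ i ∈ Finset.range (m+1), L (j+i+1) / L (j+i) = L (j+(m+1)) / L j := by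
  intro m
  induction m with
  | zero => simp
  | succ m ih =>
    rw [Finset.prod_range_succ, ih, div_mul_div_comm]
    rw [show j + (m+1) + 1 = j + (m+1+1) from by omega]
    rw [mul_comm (L j) (L (j + (m+1)))]
    rw [show j + (m+1) = j + m + 1 from by omega]
    rw [mul_div_mul_left _ _ (by rw [show j+m+1 = j+(m+1) from by omega]; exact hne (m+1))]

include hAB hn hc hlim in
lemma u_tendsto (m : ℕ) :
    Tendsto (fun j => LL c A B (j + (m+1)) / LL c A B j) atTop (𝓝 1) := by
  have hLbot := LL_atBot hAB hn hc (c := c)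
  have hratio := ratio_tendsto hAB hn hc hlim
  -- product of shifted ratios
  have hprod : Tendsto (fun j => ∏ i ∈ Finset.range (m+1),
      LL c A B (j + i + 1) / LL c A B (j + i)) atTop (𝓝 1) := by
    have := tendsto_finset_prod (f := fun i (j : ℕ) => LL c A B (j + i + 1) / LL c A B (j + i))
      (x := atTop) (a := fun _ => (1:ℝ)) (Finset.range (m+1))
      (fun i _ => hratio.comp (tendsto_add_atTop_nat i))
    simpa using this
  apply hprod.congr'
  obtain ⟨j₀, hj₀⟩ := eventually_atTop.mp (hLbot.eventually (eventually_lt_atBot 0))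
  filter_upwards [eventually_ge_atTop j₀] with j hj
  have hne : ∀ i : ℕ, LL c A B (j + i) ≠ 0 := fun i => ne_of_lt (hj₀ (j+i) (by omega))
  exact telescope (LL c A B) j hne m

/-- index of the first level with diameter ≤ r -/
noncomputable def kfun (c : ℕ → ℝ) (A B : ℝ) (r : ℝ) : ℕ := sInf {k | Del c A B k ≤ r}

include hAB hn hc in
lemma kfun_spec {r : ℝ} (hr : 0 < r) : Del c A B (kfun c A B r) ≤ r := by
  have hne : {k | Del c A B k ≤ r}.Nonempty := by
    obtain ⟨k, hk⟩ : ∃ k : ℕ, (B - A) * (1/2)^k < r := by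
      have h2 : Tendsto (fun k : ℕ => (B-A) * (1/2:ℝ)^k) atTop (𝓝 0) := by
        have := tendsto_pow_atTop_nhds_zero_of_lt_one (by norm_num : (0:ℝ) ≤ 1/2) (by norm_num : (1/2:ℝ) < 1)
        have := this.const_mul (B-A)
        simpa using this
      exact ((h2.eventually (eventually_lt_nhds hr)).exists)
    exact ⟨k, le_of_lt (lt_of_le_of_lt (Del_le_pow hAB hc hn k) hk)⟩
  exact Nat.sInf_mem hne

include hAB hn hc in
lemma kfun_min {r : ℝ} {j : ℕ} (hj : j < kfun c A B r) : r < Del c A B j := by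
  have := Nat.notMem_of_lt_sInf hj
  simpa using lt_of_not_ge this

include hAB hn hc in
lemma kfun_ge {r : ℝ} {N : ℕ} (hr : 0 < r) (hrN : r < Del c A B N) : N + 1 ≤ kfun c A B r := by
  by_contra h
  push_neg at h
  have h1 : kfun c A B r ≤ N := by omega
  have := kfun_spec hAB hn hc hr
  have := Del_antitone hAB hc hn h1
  linarith

include hAB hn hc in
lemma kfun_tendsto : Tendsto (fun r => kfun c A B r) (𝓝[>] (0:ℝ)) atTop := by
  rw [Filter.tendsto_atTop]
  intro N
  have hD := Del_pos hAB hc N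
  apply eventually_of_mem (Ioo_mem_nhdsGT_of_mem (by constructor <;> [exact le_refl 0; exact hD]))
  rintro r ⟨hr0, hrD⟩
  have := kfun_ge hAB hn hc hr0 hrD
  omega

noncomputable def psiF (c : ℕ → ℝ) (A B : ℝ) (m : ℕ) (r : ℝ) : ℝ :=
  min (Del c A B (kfun c A B r + m)) (r/2)

include hAB hc in
lemma psiF_pos_lt {m : ℕ} {r : ℝ} (hr : 0 < r) : 0 < psiF c A B m r ∧ psiF c A B m r < r := by
  constructor
  · exact lt_min (Del_pos hAB hc _) (by linarith)
  · exact lt_of_le_of_lt (min_le_right _ _) (by linarith)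

include hAB hn hc in
lemma psiF_eq {m : ℕ} (hm : 1 ≤ m) {r : ℝ} (hr : 0 < r) :
    psiF c A B m r = Del c A B (kfun c A B r + m) := by
  apply min_eq_left
  have h1 : Del c A B (kfun c A B r + m) ≤ Del c A B (kfun c A B r + 1) :=
    Del_antitone hAB hc hn (by omega)
  have h2 := Del_succ_le hAB hc hn (kfun c A B r)
  have h3 := kfun_spec hAB hn hc hr (c := c)
  linarith

include hAB hn hc hlim in
lemma psiF_tendsto {m : ℕ} (hm : 1 ≤ m) :
    Tendsto (fun r => Real.log (psiF c A B m r) / Real.log r) (𝓝[>] (0:ℝ)) (𝓝 1) := by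
  have hLbot := LL_atBot hAB hn hc (c := c)
  obtain ⟨j₀, hj₀⟩ := eventually_atTop.mp (hLbot.eventually (eventually_lt_atBot 0))
  set rψ := Del c A B (j₀+1) with hrψ
  have hrψpos : 0 < rψ := Del_pos hAB hc _
  set uf : ℕ → ℝ := fun j => LL c A B (j + (m+1)) / LL c A B j with huf
  have hu : Tendsto uf atTop (𝓝 1) := u_tendsto hAB hn hc hlim m
  have hksub : Tendsto (fun r => kfun c A B r - 1) (𝓝[>] (0:ℝ)) atTop := by
    apply (tendsto_sub_atTop_nat 1).comp (kfun_tendsto hAB hn hc)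
  have hcomp : Tendsto (fun r => uf (kfun c A B r - 1)) (𝓝[>] (0:ℝ)) (𝓝 1) := hu.comp hksub
  -- key pointwise facts
  have hkey : ∀ r ∈ Set.Ioo (0:ℝ) rψ,
      1 ≤ Real.log (psiF c A B m r) / Real.log r ∧
      Real.log (psiF c A B m r) / Real.log r ≤ uf (kfun c A B r - 1) := by
    rintro r ⟨hr0, hrr⟩
    set k := kfun c A B r with hk
    have hkge : j₀ + 2 ≤ k := kfun_ge hAB hn hc hr0 hrr
    have hpsieq : psiF c A B m r = Del c A B (k + m) := psiF_eq hAB hn hc hm hr0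
    have hDk : Del c A B k ≤ r := kfun_spec hAB hn hc hr0
    have hDkm_le : Del c A B (k + m) ≤ Del c A B k := Del_antitone hAB hc hn (by omega)
    have hrψ1 : rψ < 1 := by
      have := hj₀ (j₀+1) (by omega)
      unfold LL at this
      exact (Real.log_neg_iff (Del_pos hAB hc _)).mp this
    have hlogr : Real.log r < 0 := Real.log_neg hr0 (by linarith)
    have hx : Real.log (Del c A B (k+m)) ≤ Real.log r :=
      le_trans (Real.log_le_log (Del_pos hAB hc _) hDkm_le)
        (Real.log_le_log (Del_pos hAB hc _) hDk)
    constructor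
    · rw [hpsieq, le_div_iff_of_neg hlogr]
      linarith
    · rw [hpsieq]
      have hk1 : k - 1 + (m+1) = k + m := by omega
      have hz : LL c A B (k-1) < 0 := hj₀ _ (by omega)
      have hyz : Real.log r < LL c A B (k-1) := by
        unfold LL
        exact Real.log_lt_log hr0 (kfun_min hAB hn hc (by omega))
      show Real.log (Del c A B (k+m)) / Real.log r ≤ uf (k-1)
      have : uf (k-1) = Real.log (Del c A B (k+m)) / LL c A B (k-1) := by
        rw [huf]; simp only []; rw [hk1]; rfl
      rw [this]
      have hxneg : Real.log (Del c A B (k+m)) ≤ 0 := by linarith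
      rw [show Real.log (Del c A B (k+m)) / Real.log r
            = (-Real.log (Del c A B (k+m))) / (-Real.log r) from by rw [neg_div_neg_eq],
          show Real.log (Del c A B (k+m)) / LL c A B (k-1)
            = (-Real.log (Del c A B (k+m))) / (-LL c A B (k-1)) from by rw [neg_div_neg_eq]]
      apply div_le_div_of_nonneg_left (by linarith) (by linarith) (by linarith)
  refine tendsto_of_tendsto_of_tendsto_of_le_of_le' tendsto_const_nhds hcomp ?_ ?_
  · exact eventually_of_mem (Ioo_mem_nhdsGT_of_mem ⟨le_refl 0, hrψpos⟩)
      (fun r hr => (hkey r hr).1)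
  · exact eventually_of_mem (Ioo_mem_nhdsGT_of_mem ⟨le_refl 0, hrψpos⟩)
      (fun r hr => (hkey r hr).2)

lemma Del_add (k m : ℕ) :
    Del c A B (k + m) = Del c A B k * ∏ i ∈ Finset.range m, c (k + 1 + i) := by
  induction m with
  | zero => simp
  | succ m ih =>
    rw [show k + (m+1) = (k+m)+1 from rfl, Del_succ, ih, Finset.prod_range_succ,
        show k+m+1 = k+1+m from by omega]
    ring

set_option maxHeartbeats 1000000 in
include hAB ha0 hb0 hn hc in
lemma gap_lemma
    (hsub : ∀ w : List ℕ, MoranAdmissible n w → ∀ j : ℕ, 1 ≤ j → j ≤ n (w.length + 1) →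
      a w ≤ a (w ++ [j]) ∧ a (w ++ [j]) < b (w ++ [j]) ∧ b (w ++ [j]) ≤ b w ∧
      b (w ++ [j]) - a (w ++ [j]) = c (w.length + 1) * (b w - a w))
    (hdisj : ∀ w : List ℕ, MoranAdmissible n w → ∀ j j' : ℕ, 1 ≤ j → j ≤ n (w.length + 1) →
      1 ≤ j' → j' ≤ n (w.length + 1) → j ≠ j' →
      interior (Set.Icc (a (w ++ [j])) (b (w ++ [j]))) ∩
        interior (Set.Icc (a (w ++ [j'])) (b (w ++ [j']))) = ∅)
    (k m : ℕ)
    (hcover : ∀ z ∈ E, ∃ w, MoranAdmissible n w ∧ w.length = k + m ∧ z ∈ Set.Icc (a w) (b w))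
    (hsmall : ∏ i ∈ Finset.range m, ((n (k+1+i) : ℝ) * c (k+1+i)) ≤ 1/64)
    (r u : ℝ) (hr : 0 < r) (hDk : Del c A B k ≤ r) :
    ∃ q ∈ Set.Icc u (u + r/2),
      ∀ z ∈ E, z ∉ Set.Icc (q - Del c A B (k+m)) (q + Del c A B (k+m)) := by
  classical
  set D := Del c A B (k+m) with hD
  set Δ := Del c A B k with hΔ
  have hDpos : 0 < D := Del_pos hAB hc _
  have hΔpos : 0 < Δ := Del_pos hAB hc _
  have hDleΔ : D ≤ Δ := Del_antitone hAB hc hn (by omega)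
  -- grid
  set Jn : ℕ := ⌊r / (8*D)⌋₊ with hJn
  set q : ℕ → ℝ := fun j => u + 4*D*j with hq
  have hqmem : ∀ j ∈ Finset.range (Jn+1), q j ∈ Set.Icc u (u + r/2) := by
    intro j hj
    simp only [Finset.mem_range] at hj
    constructor
    · simp [hq]; positivity
    · have hjJ : (j:ℝ) ≤ Jn := by exact_mod_cast Nat.lt_succ_iff.mp hj
      have : (Jn:ℝ) ≤ r/(8*D) := Nat.floor_le (by positivity)
      have h4 : 4*D*(j:ℝ) ≤ 4*D*(r/(8*D)) := by
        apply mul_le_mul_of_nonneg_left (le_trans hjJ this) (by positivity)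
      have : 4*D*(r/(8*D)) = r/2 := by field_simp; ring
      simp only [hq]
      linarith
  -- bad grid points
  set P : ℕ → Prop := fun j => ∃ w, MoranAdmissible n w ∧ w.length = k + m ∧
      (Set.Icc (a w) (b w) ∩ Set.Icc (q j - D) (q j + D)).Nonempty with hP
  set bad : Finset ℕ := (Finset.range (Jn+1)).filter P with hbad
  -- choose witness for bad points
  have hwit : ∀ j, P j → ∃ w, MoranAdmissible n w ∧ w.length = k + m ∧
      (Set.Icc (a w) (b w) ∩ Set.Icc (q j - D) (q j + D)).Nonempty := fun j h => h
  set wf : ℕ → List ℕ := fun j => if h : P j then Classical.choose h else [] with hwf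
  have hwfspec : ∀ j, P j → MoranAdmissible n (wf j) ∧ (wf j).length = k + m ∧
      (Set.Icc (a (wf j)) (b (wf j)) ∩ Set.Icc (q j - D) (q j + D)).Nonempty := by
    intro j h
    simp only [hwf, dif_pos h]
    exact Classical.choose_spec h
  -- the injection target
  set M : ℤ := ⌊(r/2 + 3*D + Δ)/Δ⌋ with hM
  set T : Finset (ℤ × (Fin m → ℕ)) :=
    (Finset.Icc (0:ℤ) M) ×ˢ (Fintype.piFinset (fun i : Fin m => Finset.Icc 1 (n (k+1+i)))) with hT
  set t₀ : ℝ := u - 2*D - Δ with ht₀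
  set Φ : ℕ → ℤ × (Fin m → ℕ) :=
    fun j => (⌊(a ((wf j).take k) - t₀)/Δ⌋, fun i => (wf j).getD (k + i) 0) with hΦ
  -- facts about bad points
  have hbadfact : ∀ j ∈ bad, a ((wf j).take k) ∈ Set.Icc t₀ (u + r/2 + D) ∧
      q j ∈ Set.Icc (a (wf j) - D) (a (wf j) + 2*D) := by
    intro j hj
    rw [hbad, Finset.mem_filter] at hj
    obtain ⟨hjr, hjP⟩ := hj
    obtain ⟨hadm, hlen, ⟨ξ, hξw, hξq⟩⟩ := hwfspec j hjP
    have hqj := hqmem j hjr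
    have hsplit : (wf j).take k ++ (wf j).drop k = wf j := List.take_append_drop k (wf j)
    have hnest : a ((wf j).take k) ≤ a (wf j) ∧ b (wf j) ≤ b ((wf j).take k) := by
      have h : a ((wf j).take k) ≤ a ((wf j).take k ++ (wf j).drop k) ∧
          b ((wf j).take k ++ (wf j).drop k) ≤ b ((wf j).take k) :=
        nested hsub ((wf j).take k) ((wf j).drop k) (by rwa [hsplit])
      rwa [hsplit] at h
    have hlenw : b (wf j) - a (wf j) = D := by
      rw [hD, ← hlen]; exact len_eq ha0 hb0 hsub (wf j) hadm
    have hlenp : b ((wf j).take k) - a ((wf j).take k) = Δ := by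
      have htk : ((wf j).take k).length = k := by
        rw [List.length_take, hlen]; omega
      have hadm' : MoranAdmissible n ((wf j).take k) := by
        intro t ht
        rw [htk] at ht
        rw [getD_take_eq _ _ _ ht]
        exact hadm t (by rw [hlen]; omega)
      have h : b ((wf j).take k) - a ((wf j).take k) = Del c A B ((wf j).take k).length :=
        len_eq ha0 hb0 hsub _ hadm'
      rw [htk] at h
      rw [hΔ]
      exact h
    constructor
    · constructor
      · -- a p ≥ t₀
        have h1 : b (wf j) ≥ ξ := hξw.2
        have h2 : ξ ≥ q j - D := hξq.1
        have h3 : q j ≥ u := hqj.1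
        have : a ((wf j).take k) = b ((wf j).take k) - Δ := by linarith
        have hbb : b ((wf j).take k) ≥ b (wf j) := hnest.2
        rw [ht₀]; linarith
      · -- a p ≤ u + r/2 + D
        have h1 : a (wf j) ≤ ξ := hξw.1
        have h2 : ξ ≤ q j + D := hξq.2
        have h3 : q j ≤ u + r/2 := hqj.2
        calc a ((wf j).take k) ≤ a (wf j) := hnest.1
          _ ≤ ξ := h1
          _ ≤ q j + D := h2
          _ ≤ u + r/2 + D := by linarith
    · -- q j within D window of a (wf j)
      obtain ⟨hξ1, hξ2⟩ := hξw
      obtain ⟨hξ3, hξ4⟩ := hξq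
      have hb' : b (wf j) = a (wf j) + D := by linarith [hlenw]
      constructor
      · linarith
      · linarith
  -- Φ maps bad into T
  have hmaps : ∀ j ∈ bad, Φ j ∈ T := by
    intro j hj
    have hfact := hbadfact j hj
    rw [hbad, Finset.mem_filter] at hj
    obtain ⟨hjr, hjP⟩ := hj
    obtain ⟨hadm, hlen, _⟩ := hwfspec j hjP
    rw [hT, Finset.mem_product]
    constructor
    · rw [Finset.mem_Icc]
      constructor
      · apply Int.floor_nonneg.mpr
        have := hfact.1.1
        apply div_nonneg (by linarith) (le_of_lt hΔpos)
      · rw [hM]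
        apply Int.floor_le_floor
        rw [div_le_div_iff_of_pos_right hΔpos]
        have h2 := hfact.1.2
        rw [ht₀]
        linarith
    · rw [Fintype.mem_piFinset]
      intro i
      rw [Finset.mem_Icc]
      have := hadm (k + i) (by rw [hlen]; omega)
      rw [show k + (i:ℕ) + 1 = k + 1 + (i:ℕ) from by omega] at this
      exact this
  -- Φ is injective on bad
  have hinj : Set.InjOn Φ bad := by
    intro j hj j' hj' heq
    rw [Finset.mem_coe] at hj hj'
    have hfj := hbadfact j hj
    have hfj' := hbadfact j' hj'
    rw [hbad, Finset.mem_filter] at hj hj'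
    obtain ⟨hjr, hjP⟩ := hj
    obtain ⟨hjr', hjP'⟩ := hj'
    obtain ⟨hadm, hlen, hmeet⟩ := hwfspec j hjP
    obtain ⟨hadm', hlen', hmeet'⟩ := hwfspec j' hjP'
    rw [hΦ, Prod.mk.injEq] at heq
    obtain ⟨hfl, hsuf⟩ := heq
    -- suffixes equal
    have hsufeq : (wf j).drop k = (wf j').drop k := by
      apply List.ext_getElem
      · rw [List.length_drop, List.length_drop, hlen, hlen']
      · intro i h1 h2
        have hi : i < m := by rw [List.length_drop, hlen] at h1; omega
        have := congrFun hsuf ⟨i, hi⟩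
        simp only at this
        rw [List.getElem_drop, List.getElem_drop]
        have e1 : (wf j).getD (k+i) 0 = (wf j)[k+i]'(by rw [hlen]; omega) := by
          rw [List.getD_eq_getElem?_getD, List.getElem?_eq_getElem (by rw [hlen]; omega)]
          rfl
        have e2 : (wf j').getD (k+i) 0 = (wf j')[k+i]'(by rw [hlen']; omega) := by
          rw [List.getD_eq_getElem?_getD, List.getElem?_eq_getElem (by rw [hlen']; omega)]
          rfl
        rw [e1, e2] at this
        exact this
    -- prefixes equal
    have htk : ((wf j).take k).length = k := by rw [List.length_take, hlen]; omega
    have htk' : ((wf j').take k).length = k := by rw [List.length_take, hlen']; omega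
    have hadmtk : MoranAdmissible n ((wf j).take k) := by
      intro t ht
      rw [htk] at ht
      rw [getD_take_eq _ _ _ ht]
      exact hadm t (by rw [hlen]; omega)
    have hadmtk' : MoranAdmissible n ((wf j').take k) := by
      intro t ht
      rw [htk'] at ht
      rw [getD_take_eq _ _ _ ht]
      exact hadm' t (by rw [hlen']; omega)
    have hprefeq : (wf j).take k = (wf j').take k := by
      by_contra hne
      have hsep : Del c A B k ≤ |a ((wf j).take k) - a ((wf j').take k)| :=
        endpoints_sep hAB ha0 hb0 hc hsub hdisj k _ _ hadmtk hadmtk' htk htk' hne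
      -- same floor ⇒ difference < Δ
      have h1 : |a ((wf j).take k) - a ((wf j').take k)| < Δ := by
        have e1 := Int.sub_one_lt_floor ((a ((wf j).take k) - t₀)/Δ)
        have e2 := Int.floor_le ((a ((wf j).take k) - t₀)/Δ)
        have e3 := Int.sub_one_lt_floor ((a ((wf j').take k) - t₀)/Δ)
        have e4 := Int.floor_le ((a ((wf j').take k) - t₀)/Δ)
        rw [hfl] at e1 e2
        set v := (⌊(a ((wf j').take k) - t₀)/Δ⌋ : ℝ)
        rw [abs_sub_lt_iff]
        constructor
        · have h7 : (a ((wf j).take k) - a ((wf j').take k))/Δ < 1 := by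
            rw [show a ((wf j).take k) - a ((wf j').take k)
                = (a ((wf j).take k) - t₀) - (a ((wf j').take k) - t₀) from by ring, sub_div]
            linarith
          exact (div_lt_one hΔpos).mp h7
        · have h7 : (a ((wf j').take k) - a ((wf j).take k))/Δ < 1 := by
            rw [show a ((wf j').take k) - a ((wf j).take k)
                = (a ((wf j').take k) - t₀) - (a ((wf j).take k) - t₀) from by ring, sub_div]
            linarith
          exact (div_lt_one hΔpos).mp h7
      rw [hΔ] at h1
      linarith [hsep]
    have hweq : wf j = wf j' := by
      rw [← List.take_append_drop k (wf j), ← List.take_append_drop k (wf j'), hprefeq, hsufeq]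
    -- both grid points in window of length 3D around a (wf j)
    have hw1 := hfj.2
    have hw2 := hfj'.2
    rw [← hweq] at hw2
    have : |q j - q j'| ≤ 3*D := by
      rw [abs_sub_le_iff]
      constructor <;> [skip; skip] <;>
      · have := hw1.1; have := hw1.2; have := hw2.1; have := hw2.2; linarith
    have hqd : q j - q j' = 4*D*((j:ℝ) - (j':ℝ)) := by simp only [hq]; ring
    have h5 : |(j:ℝ) - (j':ℝ)| < 1 := by
      rw [hqd, abs_mul, abs_of_pos (show (0:ℝ) < 4*D by positivity)] at this
      nlinarith [abs_nonneg ((j:ℝ)-(j':ℝ))]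
    have h8 : |(((j:ℤ) - (j':ℤ) : ℤ) : ℝ)| < 1 := by
      rw [show (((j:ℤ) - (j':ℤ) : ℤ) : ℝ) = (j:ℝ) - (j':ℝ) from by push_cast; ring]
      exact h5
    rw [← Int.cast_abs] at h8
    have h9 : |(j:ℤ) - (j':ℤ)| < 1 := by exact_mod_cast h8
    rw [abs_lt] at h9
    omega
  -- cardinality bound
  have hcard : bad.card ≤ T.card := Finset.card_le_card_of_injOn Φ hmaps hinj
  have hTcard : T.card = (M.toNat + 1) * ∏ i : Fin m, n (k+1+i) := by
    rw [hT, Finset.card_product, Fintype.card_piFinset]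
    congr 1
    · rw [Int.card_Icc]
      have hM0 : 0 ≤ M := by
        rw [hM]
        apply Int.floor_nonneg.mpr
        apply div_nonneg _ (le_of_lt hΔpos)
        nlinarith
      omega
    · apply Finset.prod_congr rfl
      intro i _
      rw [Nat.card_Icc]
      omega
  -- real inequality
  have hNprod : (∏ i : Fin m, (n (k+1+i) : ℝ)) * D ≤ Δ / 64 := by
    have hDel : D = Δ * ∏ i ∈ Finset.range m, c (k+1+i) := by
      rw [hD, hΔ]
      exact Del_add (c := c) (A := A) (B := B) k m
    have hsplit : (∏ i : Fin m, (n (k+1+i) : ℝ)) * ∏ i ∈ Finset.range m, c (k+1+i)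
        = ∏ i ∈ Finset.range m, ((n (k+1+i) : ℝ) * c (k+1+i)) := by
      rw [Finset.prod_mul_distrib]
      congr 1
      rw [← Fin.prod_univ_eq_prod_range]
    calc (∏ i : Fin m, (n (k+1+i) : ℝ)) * D
        = Δ * ((∏ i : Fin m, (n (k+1+i) : ℝ)) * ∏ i ∈ Finset.range m, c (k+1+i)) := by
          rw [hDel]; ring
      _ ≤ Δ * (1/64) := by
          rw [hsplit]
          apply mul_le_mul_of_nonneg_left hsmall (le_of_lt hΔpos)
      _ = Δ / 64 := by ring
  have hMreal : ((M.toNat : ℝ) + 1) ≤ 6 * r / Δ := by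
    have h1 : (M:ℝ) ≤ (r/2 + 3*D + Δ)/Δ := by
      rw [hM]
      exact Int.floor_le _
    have hM0 : (0:ℤ) ≤ M := by
      rw [hM]; apply Int.floor_nonneg.mpr; apply div_nonneg _ (le_of_lt hΔpos); nlinarith
    have h2 : (M.toNat : ℝ) = (M : ℝ) := by exact_mod_cast Int.toNat_of_nonneg hM0
    rw [h2]
    have hDr : D ≤ r := le_trans hDleΔ hDk
    have heq : (r/2 + 3*D + Δ)/Δ + 1 = (r/2 + 3*D + 2*Δ)/Δ := by field_simp; ring
    have hb : (r/2 + 3*D + 2*Δ)/Δ ≤ 6*r/Δ := by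
      rw [div_le_div_iff_of_pos_right hΔpos]
      linarith
    linarith
  -- combine to show bad.card < Jn + 1
  have hrD : 0 < r / D := by positivity
  have hchain : (bad.card : ℝ) < (Jn : ℝ) + 1 := by
    have h1 : (bad.card : ℝ) ≤ ((M.toNat : ℝ) + 1) * ∏ i : Fin m, (n (k+1+i) : ℝ) := by
      have h2 : (bad.card : ℝ) ≤ (T.card : ℝ) := by exact_mod_cast hcard
      rw [hTcard] at h2
      push_cast at h2
      exact h2
    have hN0 : (0:ℝ) ≤ ∏ i : Fin m, (n (k+1+i) : ℝ) := by positivity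
    have h3 : ((M.toNat : ℝ) + 1) * ∏ i : Fin m, (n (k+1+i) : ℝ)
        ≤ (6 * r / Δ) * ∏ i : Fin m, (n (k+1+i) : ℝ) :=
      mul_le_mul_of_nonneg_right hMreal hN0
    have h4 : (6 * r / Δ) * ∏ i : Fin m, (n (k+1+i) : ℝ) ≤ (6 * r / Δ) * (Δ / (64 * D)) := by
      apply mul_le_mul_of_nonneg_left _ (by positivity)
      rw [le_div_iff₀ (by positivity)]
      calc (∏ i : Fin m, (n (k+1+i) : ℝ)) * (64 * D)
          = 64 * ((∏ i : Fin m, (n (k+1+i) : ℝ)) * D) := by ring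
        _ ≤ 64 * (Δ / 64) := by linarith [hNprod]
        _ = Δ := by ring
    have h5 : (6 * r / Δ) * (Δ / (64 * D)) = (6/64) * (r/D) := by
      field_simp
    have h6 : (6/64 : ℝ) * (r/D) < (1/8) * (r/D) := by
      apply mul_lt_mul_of_pos_right _ hrD
      norm_num
    have h7 : r / (8*D) < (Jn : ℝ) + 1 := by
      have := Nat.lt_floor_add_one (r / (8*D))
      exact_mod_cast this
    have h8 : (1/8 : ℝ) * (r/D) = r / (8*D) := by
      field_simp
    linarith
  have hfinal : bad.card < Jn + 1 := by exact_mod_cast hchain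
  have hex : ∃ j ∈ Finset.range (Jn+1), j ∉ bad := by
    by_contra h
    push_neg at h
    have hsub2 : Finset.range (Jn+1) ⊆ bad := fun j hj => h j hj
    have := Finset.card_le_card hsub2
    rw [Finset.card_range] at this
    omega
  obtain ⟨j, hjr, hjbad⟩ := hex
  refine ⟨q j, hqmem j hjr, ?_⟩
  intro z hz hzmem
  apply hjbad
  rw [hbad, Finset.mem_filter]
  obtain ⟨w, hwadm, hwlen, hzw⟩ := hcover z hz
  exact ⟨hjr, w, hwadm, hwlen, ⟨z, hzw, hzmem⟩⟩


include hn hc in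
lemma c_half (k : ℕ) (hk : 1 ≤ k) : c k ≤ 1/2 := by
  have h1 := (hc k hk).2
  have h2 := hn k hk
  have : (1:ℝ)/(n k) ≤ 1/2 := by
    apply one_div_le_one_div_of_le (by norm_num)
    exact_mod_cast h2
  linarith

include hn hc hsup in
lemma theta_bound : ∃ k₀ m : ℕ, 1 ≤ m ∧ ∀ k, k₀ ≤ k →
    ∏ i ∈ Finset.range m, ((n (k+1+i) : ℝ) * c (k+1+i)) ≤ 1/64 := by
  set f : ℕ → ℝ := fun k => Real.log (n k : ℝ) / (-Real.log (c k)) with hf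
  have hfnonneg : ∀ k, 1 ≤ k → 0 ≤ f k := by
    intro k hk
    apply div_nonneg
    · apply Real.log_nonneg
      have := hn k hk
      exact_mod_cast (by omega : 1 ≤ n k)
    · have h1 := (hc k hk).1
      have h2 := c_half hn hc k hk
      have : Real.log (c k) < 0 := Real.log_neg h1 (by linarith)
      linarith
  have hbdd : Filter.IsBoundedUnder (· ≤ ·) Filter.atTop f := by
    refine Filter.isBoundedUnder_of_eventually_le (a := 1) ?_
    filter_upwards [eventually_ge_atTop 1] with k hk
    have hck := (hc k hk).1
    have hch := c_half hn hc k hk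
    have hlogc : Real.log (c k) < 0 := Real.log_neg hck (by linarith)
    rw [hf]
    simp only
    rw [div_le_one (by linarith)]
    have hnk : (n k : ℝ) ≤ 1 / c k := by
      have h1 := (hc k hk).2
      have hnpos : (0:ℝ) < (n k : ℝ) := by
        have := hn k hk
        exact_mod_cast (by omega : 0 < n k)
      rw [le_div_iff₀ hck]
      calc (n k : ℝ) * c k ≤ (n k : ℝ) * (1 / (n k : ℝ)) :=
            mul_le_mul_of_nonneg_left h1 (le_of_lt hnpos)
        _ = 1 := by field_simp
    calc Real.log (n k : ℝ) ≤ Real.log (1 / c k) := by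
          apply Real.log_le_log _ hnk
          have := hn k hk
          exact_mod_cast (by omega : 0 < n k)
      _ = -Real.log (c k) := by rw [one_div, Real.log_inv]
  set γ : ℝ := max ((Filter.limsup f Filter.atTop + 1)/2) (1/2) with hγ
  have hγ1 : γ < 1 := by
    rw [hγ]
    apply max_lt _ (by norm_num)
    linarith [hsup]
  have hγhalf : (1/2 : ℝ) ≤ γ := le_max_right _ _
  have hγgt : Filter.limsup f Filter.atTop < γ := by
    rw [hγ]
    calc Filter.limsup f Filter.atTop < (Filter.limsup f Filter.atTop + 1)/2 := by linarith [hsup]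
      _ ≤ γ := le_max_left _ _
  have hev : ∀ᶠ k in Filter.atTop, f k < γ :=
    Filter.eventually_lt_of_limsup_lt hγgt hbdd
  obtain ⟨k₁, hk₁⟩ := Filter.eventually_atTop.mp hev
  set θ : ℝ := (1/2 : ℝ) ^ (1 - γ) with hθdef
  have hθpos : 0 < θ := Real.rpow_pos_of_pos (by norm_num) _
  have hθlt1 : θ < 1 := by
    apply Real.rpow_lt_one (by norm_num) (by norm_num)
    linarith
  -- pointwise bound : for k ≥ max k₁ 1, n k * c k ≤ θ
  have hpt : ∀ k, max k₁ 1 ≤ k → (n k : ℝ) * c k ≤ θ := by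
    intro k hk
    have hk1 : 1 ≤ k := le_trans (le_max_right _ _) hk
    have hkk : k₁ ≤ k := le_trans (le_max_left _ _) hk
    have hck := (hc k hk1).1
    have hch := c_half hn hc k hk1
    have hlogc : Real.log (c k) < 0 := Real.log_neg hck (by linarith)
    have hfk := hk₁ k hkk
    rw [hf] at hfk
    simp only at hfk
    have hlogn : Real.log (n k : ℝ) < γ * (-Real.log (c k)) := by
      have hpos : 0 < -Real.log (c k) := by linarith
      calc Real.log (n k : ℝ) = (Real.log (n k : ℝ) / (-Real.log (c k))) * (-Real.log (c k)) := by
            rw [div_mul_cancel₀ _ (ne_of_gt hpos)]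
        _ < γ * (-Real.log (c k)) := by
            apply mul_lt_mul_of_pos_right hfk hpos
    -- n k ≤ (c k) ^ (-γ)
    have hn' : (n k : ℝ) ≤ (c k) ^ (-γ : ℝ) := by
      have hnpos : (0:ℝ) < (n k : ℝ) := by
        have := hn k hk1; positivity
      rw [← Real.exp_log hnpos, ← Real.exp_log (Real.rpow_pos_of_pos hck _)]
      apply Real.exp_le_exp.mpr
      rw [Real.log_rpow hck]
      nlinarith
    have hmul : (n k : ℝ) * c k ≤ (c k) ^ (1 - γ : ℝ) := by
      have h1 : (n k : ℝ) * c k ≤ (c k) ^ (-γ : ℝ) * c k :=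
        mul_le_mul_of_nonneg_right hn' (le_of_lt hck)
      have h2 : (c k) ^ (-γ : ℝ) * c k = (c k) ^ (1 - γ : ℝ) := by
        rw [show (1 - γ : ℝ) = -γ + 1 from by ring, Real.rpow_add hck, Real.rpow_one]
      rw [← h2]
      exact h1
    calc (n k : ℝ) * c k ≤ (c k) ^ (1 - γ : ℝ) := hmul
      _ ≤ θ := by
        rw [hθdef]
        apply Real.rpow_le_rpow (le_of_lt hck) hch (by linarith)
  -- choose m
  obtain ⟨m₀, hm₀⟩ := exists_pow_lt_of_lt_one (show (0:ℝ) < 1/64 by norm_num) hθlt1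
  set m : ℕ := max m₀ 1 with hm
  refine ⟨max k₁ 1, m, le_max_right _ _, ?_⟩
  intro k hk
  have hb : ∀ i ∈ Finset.range m, (n (k+1+i) : ℝ) * c (k+1+i) ≤ θ := by
    intro i _
    apply hpt
    omega
  have hnn : ∀ i ∈ Finset.range m, 0 ≤ (n (k+1+i) : ℝ) * c (k+1+i) := by
    intro i _
    have h1 : 1 ≤ k+1+i := by omega
    have := (hc (k+1+i) h1).1
    positivity
  calc ∏ i ∈ Finset.range m, ((n (k+1+i) : ℝ) * c (k+1+i))
      ≤ ∏ _i ∈ Finset.range m, θ := Finset.prod_le_prod hnn hb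
    _ = θ ^ m := by rw [Finset.prod_const, Finset.card_range]
    _ ≤ θ ^ m₀ := pow_le_pow_of_le_one (le_of_lt hθpos) (le_of_lt hθlt1) (le_max_left _ _)
    _ ≤ 1/64 := le_of_lt hm₀

end MoranAux

/-- If `n_k ≥ 2`, `c_k ∈ (0, 1/n_k]`, `log c_k / log (c_1 ⋯ c_k) → 0` and
`limsup_k log n_k / (- log c_k) < 1`, then every Moran set `E ∈ M(J, {n_k}, {c_k})` is
quasi uniformly disconnected. -/
theorem moran_quasiUniformlyDisconnected (J : Set ℝ) (n : ℕ → ℕ) (c : ℕ → ℝ)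
    (hn : ∀ k : ℕ, 1 ≤ k → 2 ≤ n k)
    (hc : ∀ k : ℕ, 1 ≤ k → 0 < c k ∧ c k ≤ 1 / (n k : ℝ))
    (hlim : Filter.Tendsto
      (fun k : ℕ => Real.log (c k) / Real.log (∏ i ∈ Finset.Icc 1 k, c i))
      Filter.atTop (𝓝 0))
    (hsup : Filter.limsup (fun k : ℕ => Real.log (n k : ℝ) / (-Real.log (c k)))
      Filter.atTop < 1)
    (E : Set ℝ) (hE : IsMoranSet J n c E) :
    QuasiUniformlyDisconnectedSet E := by
  obtain ⟨A, B, hAB, hJ, a, b, ha0, hb0, hsub, hdisj, hFdef⟩ := hE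
  obtain ⟨k₀, m, hm1, hsmall⟩ := theta_bound hn hc hsup
  refine ⟨psiF c A B m, fun r hr => psiF_pos_lt hAB hc hr,
    psiF_tendsto hAB hn hc hlim hm1, Del c A B k₀, Del_pos hAB hc k₀, ?_⟩
  intro x hx r hr hrstar
  set k := kfun c A B r with hk
  have hk₀ : k₀ ≤ k := by
    have := kfun_ge hAB hn hc hr hrstar
    omega
  have hDk : Del c A B k ≤ r := kfun_spec hAB hn hc hr
  have hcover : ∀ z ∈ E, ∃ w, MoranAdmissible n w ∧ w.length = k + m ∧
      z ∈ Set.Icc (a w) (b w) := by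
    intro z hz
    rw [hFdef] at hz
    have hz2 := Set.mem_iInter.mp hz (k + m)
    simp only [Set.mem_iUnion, Set.mem_setOf_eq, exists_prop] at hz2
    obtain ⟨w, ⟨hadm, hlen⟩, hzw⟩ := hz2
    exact ⟨w, hadm, hlen, hzw⟩
  have hDpos : 0 < Del c A B (k + m) := Del_pos hAB hc _
  obtain ⟨qR, hqRmem, hqRgap⟩ := gap_lemma hAB ha0 hb0 hn hc hsub hdisj k m hcover
    (hsmall k hk₀) r (x + r/2) hr hDk
  obtain ⟨qL, hqLmem, hqLgap⟩ := gap_lemma hAB ha0 hb0 hn hc hsub hdisj k m hcover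
    (hsmall k hk₀) r (x - r) hr hDk
  have hψD : psiF c A B m r ≤ Del c A B (k + m) := min_le_left _ _
  have hψr2 : psiF c A B m r ≤ r/2 := min_le_right _ _
  have hqL1 : x - r ≤ qL := hqLmem.1
  have hqL2 : qL ≤ x - r/2 := by have := hqLmem.2; linarith
  have hqR1 : x + r/2 ≤ qR := hqRmem.1
  have hqR2 : qR ≤ x + r := by have := hqRmem.2; linarith
  refine ⟨E ∩ Set.Icc qL qR, Set.inter_subset_left, ?_, ?_, ?_⟩
  · rintro y ⟨hyE, hyB⟩
    rw [Metric.mem_closedBall, Real.dist_eq, abs_sub_le_iff] at hyB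
    exact ⟨hyE, by linarith [hyB.2], by linarith [hyB.1]⟩
  · rintro y ⟨hyE, hy1, hy2⟩
    rw [Metric.mem_closedBall, Real.dist_eq, abs_sub_le_iff]
    constructor <;> linarith
  · rintro y ⟨hyE, hy1, hy2⟩ z ⟨hzE, hzF⟩
    have hznot : z ∉ Set.Icc qL qR := fun h => hzF ⟨hzE, h⟩
    rw [Set.mem_Icc, not_and_or] at hznot
    rw [Real.dist_eq]
    rcases hznot with hzL | hzR
    · push_neg at hzL
      have hgap := hqLgap z hzE
      rw [Set.mem_Icc, not_and_or] at hgap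
      have hz3 : z < qL - Del c A B (k + m) := by
        rcases hgap with h | h
        · push_neg at h; linarith
        · push_neg at h; linarith
      have h4 : Del c A B (k + m) ≤ y - z := by linarith
      calc psiF c A B m r ≤ Del c A B (k + m) := hψD
        _ ≤ y - z := h4
        _ ≤ |y - z| := le_abs_self _
    · push_neg at hzR
      have hgap := hqRgap z hzE
      rw [Set.mem_Icc, not_and_or] at hgap
      have hz3 : qR + Del c A B (k + m) < z := by
        rcases hgap with h | h
        · push_neg at h; linarith
        · push_neg at h; linarith
      have h4 : Del c A B (k + m) ≤ z - y := by linarith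
      calc psiF c A B m r ≤ Del c A B (k + m) := hψD
        _ ≤ z - y := h4
        _ ≤ |y - z| := by rw [abs_sub_comm]; exact le_abs_self _
end
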